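/- arXiv:1502.04664 — 10 statements merged into one kernel-verified Lean document; each statement's English description precedes it below -/
import Mathlib

section
/- Suppose the numbers a_1 < a_2 < ... < a_m are positive and ordered ascendingly. Then the equation F(λ) = 0 has exactly m roots in ℂ; all of them are real and they interlace with the a_j. Precisely: there exist real numbers b_1, ..., b_m with a_j < b_j < a_{j+1} for j = 1, ..., m−1 and a_m < b_m, such that F(b_j) = 0 for each j, and moreover every λ ∈ ℂ \ {a_1, ..., a_m} with F(λ) = 0 equals b_j for some j ∈ {1, ..., m}. -/
open Filter Topology Polynomial Finset

private lemma gaps_aux_atBot {c p : ℝ} (hc : 0 < c) :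
    Tendsto (fun x : ℝ => c / (p - x)) (𝓝[>] p) atBot := by
  have h1 : Tendsto (fun x : ℝ => x - p) (𝓝[>] p) (𝓝[>] 0) := by
    apply tendsto_nhdsWithin_of_tendsto_nhds_of_eventually_within
    · have : Tendsto (fun x : ℝ => x - p) (𝓝 p) (𝓝 (p - p)) := (tendsto_id.sub_const p)
      simpa using this.mono_left nhdsWithin_le_nhds
    · filter_upwards [self_mem_nhdsWithin] with x hx
      exact sub_pos.2 (Set.mem_Ioi.1 hx)
  have h2 : Tendsto (fun x : ℝ => c / (x - p)) (𝓝[>] p) atTop := by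
    simpa [div_eq_mul_inv] using (tendsto_inv_nhdsGT_zero.comp h1).const_mul_atTop hc
  have h3 := tendsto_neg_atTop_atBot.comp h2
  refine h3.congr fun x => ?_
  rw [Function.comp_apply, ← neg_div, neg_div, ← div_neg, neg_sub]

private lemma gaps_aux_atTop {c p : ℝ} (hc : 0 < c) :
    Tendsto (fun x : ℝ => c / (p - x)) (𝓝[<] p) atTop := by
  have h1 : Tendsto (fun x : ℝ => p - x) (𝓝[<] p) (𝓝[>] 0) := by
    apply tendsto_nhdsWithin_of_tendsto_nhds_of_eventually_within
    · have : Tendsto (fun x : ℝ => p - x) (𝓝 p) (𝓝 (p - p)) :=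
        (tendsto_const_nhds.sub tendsto_id)
      simpa using this.mono_left nhdsWithin_le_nhds
    · filter_upwards [self_mem_nhdsWithin] with x hx
      exact sub_pos.2 (Set.mem_Iio.1 hx)
  simpa [div_eq_mul_inv] using (tendsto_inv_nhdsGT_zero.comp h1).const_mul_atTop hc

private lemma gaps_aux_zero (c p : ℝ) :
    Tendsto (fun x : ℝ => c / (p - x)) atTop (𝓝 0) := by
  have h1 : Tendsto (fun x : ℝ => x - p) atTop atTop := tendsto_atTop_add_const_right _ _ tendsto_id
  have h2 : Tendsto (fun x : ℝ => (x - p)⁻¹) atTop (𝓝 0) := h1.inv_tendsto_atTop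
  have h3 : Tendsto (fun x : ℝ => -(c * (x - p)⁻¹)) atTop (𝓝 0) := by
    simpa using (h2.const_mul c).neg
  refine h3.congr fun x => ?_
  rw [← div_eq_mul_inv, ← neg_div, neg_div, ← div_neg, neg_sub]

/-- For positive, ascending numbers `a 0 < a 1 < ... < a (m-1)`, the equation
`F(λ) = 0`, where `F(λ) = 1 + ∑ i, a i * l i / (l0 * (a i - λ))`, has exactly `m` roots in `ℂ`;
they are real and interlace with the `a j`. -/
theorem gaps_interlacing_roots
    (m : ℕ) (hm : 1 ≤ m)
    (l0 : ℝ) (hl0 : 0 < l0)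
    (l a : Fin m → ℝ) (hl : ∀ i, 0 < l i) (ha : ∀ i, 0 < a i)
    (hmono : ∀ i j : Fin m, i < j → a i < a j)
    (F : ℂ → ℂ)
    (hF : ∀ lam : ℂ, F lam = 1 + ∑ i : Fin m,
      ((a i : ℂ) * (l i : ℂ)) / ((l0 : ℂ) * ((a i : ℂ) - lam))) :
    ∃ b : Fin m → ℝ,
      (∀ j : Fin m, a j < b j) ∧
      (∀ j : Fin m, ∀ h : j.1 + 1 < m, b j < a ⟨j.1 + 1, h⟩) ∧
      (∀ j : Fin m, F ((b j : ℂ)) = 0) ∧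
      (∀ lam : ℂ, (∀ i : Fin m, lam ≠ (a i : ℂ)) → F lam = 0 →
        ∃ j : Fin m, lam = (b j : ℂ)) := by
  classical
  set c : Fin m → ℝ := fun i => a i * l i / l0 with hcdef
  have hcpos : ∀ i, 0 < c i := fun i => div_pos (mul_pos (ha i) (hl i)) hl0
  set g : ℝ → ℝ := fun x => 1 + ∑ i, c i / (a i - x) with hgdef
  have hmono' : ∀ i j : Fin m, i ≤ j → a i ≤ a j := by
    intro i j hij
    rcases lt_or_eq_of_le hij with h | h
    · exact (hmono i j h).le
    · rw [h]
  -- F restricted to reals equals g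
  have hFg : ∀ x : ℝ, F (x : ℂ) = ((g x : ℝ) : ℂ) := by
    intro x
    rw [hF]
    push_cast [hgdef, hcdef]
    simp only [div_div]
  -- continuity of g away from the a i
  have hgcont : ∀ s : Set ℝ, (∀ i, ∀ x ∈ s, a i ≠ x) → ContinuousOn g s := by
    intro s hs
    apply ContinuousOn.add continuousOn_const
    apply continuousOn_finset_sum
    intro i _
    exact ContinuousOn.div continuousOn_const
      (continuousOn_const.sub continuousOn_id)
      (fun x hx => sub_ne_zero.2 (hs i x hx))
  -- limits of g near poles from the right
  have hright : ∀ j : Fin m, Tendsto g (𝓝[>] (a j)) atBot := by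
    intro j
    have hsplit : ∀ x : ℝ, g x = c j / (a j - x)
        + (1 + ∑ i ∈ univ.erase j, c i / (a i - x)) := by
      intro x
      rw [hgdef]
      simp only
      rw [← Finset.add_sum_erase _ _ (mem_univ j)]
      ring
    rw [show g = fun x => c j / (a j - x)
        + (1 + ∑ i ∈ univ.erase j, c i / (a i - x)) from funext hsplit]
    have h2 : Tendsto (fun x : ℝ => 1 + ∑ i ∈ univ.erase j, c i / (a i - x)) (𝓝[>] (a j))
        (𝓝 (1 + ∑ i ∈ univ.erase j, c i / (a i - a j))) := by
      apply Tendsto.mono_left _ nhdsWithin_le_nhds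
      apply Filter.Tendsto.add tendsto_const_nhds
      apply tendsto_finset_sum
      intro i hi
      have hne : a i - a j ≠ 0 := by
        rcases lt_trichotomy i j with h | h | h
        · exact sub_ne_zero.2 (hmono i j h).ne
        · exact absurd h (by simpa using (Finset.mem_erase.1 hi).1)
        · exact sub_ne_zero.2 (hmono j i h).ne'
      exact (tendsto_const_nhds.div ((tendsto_const_nhds.sub tendsto_id)) hne)
    exact (h2.add_atBot (gaps_aux_atBot (hcpos j))).congr (fun x => by ring)
  -- limits of g near poles from the left
  have hleft : ∀ j : Fin m, Tendsto g (𝓝[<] (a j)) atTop := by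
    intro j
    have hsplit : ∀ x : ℝ, g x = c j / (a j - x)
        + (1 + ∑ i ∈ univ.erase j, c i / (a i - x)) := by
      intro x
      rw [hgdef]; simp only
      rw [← Finset.add_sum_erase _ _ (mem_univ j)]; ring
    rw [show g = fun x => c j / (a j - x)
        + (1 + ∑ i ∈ univ.erase j, c i / (a i - x)) from funext hsplit]
    have h2 : Tendsto (fun x : ℝ => 1 + ∑ i ∈ univ.erase j, c i / (a i - x)) (𝓝[<] (a j))
        (𝓝 (1 + ∑ i ∈ univ.erase j, c i / (a i - a j))) := by
      apply Tendsto.mono_left _ nhdsWithin_le_nhds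
      apply Filter.Tendsto.add tendsto_const_nhds
      apply tendsto_finset_sum
      intro i hi
      have hne : a i - a j ≠ 0 := by
        rcases lt_trichotomy i j with h | h | h
        · exact sub_ne_zero.2 (hmono i j h).ne
        · exact absurd h (by simpa using (Finset.mem_erase.1 hi).1)
        · exact sub_ne_zero.2 (hmono j i h).ne'
      exact (tendsto_const_nhds.div ((tendsto_const_nhds.sub tendsto_id)) hne)
    exact (h2.add_atTop (gaps_aux_atTop (hcpos j))).congr (fun x => by ring)
  -- limit of g at infinity
  have hinf : Tendsto g atTop (𝓝 1) := by
    rw [hgdef]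
    have : Tendsto (fun x : ℝ => ∑ i, c i / (a i - x)) atTop (𝓝 0) := by
      have := tendsto_finset_sum (univ : Finset (Fin m))
        (fun i _ => gaps_aux_zero (c i) (a i))
      simpa using this
    simpa using (tendsto_const_nhds (x := (1:ℝ))).add this
  -- construction of the roots b j
  have key : ∀ j : Fin m, ∃ x : ℝ, a j < x ∧ (∀ h : j.1 + 1 < m, x < a ⟨j.1 + 1, h⟩)
      ∧ g x = 0 := by
    intro j
    by_cases hj : j.1 + 1 < m
    · -- interval (a j, a (j+1))
      set R := a ⟨j.1 + 1, hj⟩ with hR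
      have hjR : a j < R := hmono j ⟨j.1 + 1, hj⟩ (by simp [Fin.lt_def])
      -- point x₁ near a j with g x₁ < 0
      have h1 : ∀ᶠ x in 𝓝[>] (a j), g x < 0 := (hright j).eventually (eventually_lt_atBot 0)
      have h1' : ∀ᶠ x in 𝓝[>] (a j), x ∈ Set.Ioo (a j) R :=
        Filter.eventually_mem_set.2 (Ioo_mem_nhdsGT_of_mem ⟨le_refl _, hjR⟩)
      obtain ⟨x₁, hx₁g, hx₁m⟩ := (h1.and h1').exists
      -- point x₂ near R with g x₂ > 0
      have h2 : ∀ᶠ x in 𝓝[<] R, 0 < g x := (hleft ⟨j.1 + 1, hj⟩).eventually (eventually_gt_atTop 0)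
      have h2' : ∀ᶠ x in 𝓝[<] R, x ∈ Set.Ioo x₁ R :=
        Filter.eventually_mem_set.2 (Ioo_mem_nhdsLT_of_mem ⟨hx₁m.2, le_refl _⟩)
      obtain ⟨x₂, hx₂g, hx₂m⟩ := (h2.and h2').exists
      have h12 : x₁ ≤ x₂ := hx₂m.1.le
      have hcont : ContinuousOn g (Set.Icc x₁ x₂) := by
        apply hgcont
        intro i x hx
        rcases le_or_gt i j with h | h
        · exact ne_of_lt (lt_of_le_of_lt (hmono' i j h) (lt_of_lt_of_le hx₁m.1 hx.1))
        · have : R ≤ a i := hmono' ⟨j.1 + 1, hj⟩ i (by simpa [Fin.le_def] using h)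
          exact ne_of_gt (lt_of_le_of_lt hx.2 (lt_of_lt_of_le hx₂m.2 this))
      have := intermediate_value_Ioo h12 hcont
      have h0 : (0:ℝ) ∈ Set.Ioo (g x₁) (g x₂) := ⟨hx₁g, hx₂g⟩
      obtain ⟨x, hxm, hgx⟩ := this h0
      exact ⟨x, lt_trans hx₁m.1 hxm.1, fun h => lt_trans hxm.2 hx₂m.2, hgx⟩
    · -- last interval (a j, ∞)
      have h1 : ∀ᶠ x in 𝓝[>] (a j), g x < 0 := (hright j).eventually (eventually_lt_atBot 0)
      obtain ⟨x₁, hx₁g, hx₁m⟩ :=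
        (h1.and (Filter.eventually_mem_set.2 self_mem_nhdsWithin)).exists
      have h2 : ∀ᶠ x in atTop, 0 < g x := hinf.eventually (eventually_gt_nhds one_pos)
      obtain ⟨x₂, hx₂g, hx₂m⟩ := (h2.and (eventually_gt_atTop x₁)).exists
      have hcont : ContinuousOn g (Set.Icc x₁ x₂) := by
        apply hgcont
        intro i x hx
        have hij : i ≤ j := by
          by_contra hcon
          push_neg at hcon
          exact hj (lt_of_le_of_lt (Nat.succ_le_of_lt hcon) i.isLt)
        exact ne_of_lt (lt_of_le_of_lt (hmono' i j hij) (lt_of_lt_of_le hx₁m hx.1))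
      obtain ⟨x, hxm, hgx⟩ := intermediate_value_Ioo hx₂m.le hcont ⟨hx₁g, hx₂g⟩
      exact ⟨x, lt_trans hx₁m hxm.1, fun h => absurd h hj, hgx⟩
  choose b hb1 hb2 hb3 using key
  -- b j is distinct from all a i
  have hbne : ∀ j i : Fin m, a i ≠ b j := by
    intro j i
    rcases le_or_gt i j with h | h
    · exact ne_of_lt (lt_of_le_of_lt (hmono' i j h) (hb1 j))
    · have hj : j.1 + 1 < m := lt_of_le_of_lt (Nat.succ_le_of_lt h) i.isLt
      have : a ⟨j.1 + 1, hj⟩ ≤ a i := hmono' _ _ (by simpa [Fin.le_def] using h)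
      exact ne_of_gt (lt_of_lt_of_le (hb2 j hj) this)
  -- b is strictly monotone hence injective
  have hbmono : ∀ i j : Fin m, i < j → b i < b j := by
    intro i j hij
    have hi1 : i.1 + 1 < m := lt_of_le_of_lt (Nat.succ_le_of_lt hij) j.isLt
    have h1 : b i < a ⟨i.1 + 1, hi1⟩ := hb2 i hi1
    have h2 : a ⟨i.1 + 1, hi1⟩ ≤ a j := hmono' _ _ (by simpa [Fin.le_def] using hij)
    exact lt_trans (lt_of_lt_of_le h1 h2) (hb1 j)
  have hbinj : Function.Injective b := by
    intro i j hij
    rcases lt_trichotomy i j with h | h | h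
    · exact absurd hij (ne_of_lt (hbmono i j h))
    · exact h
    · exact absurd hij.symm (ne_of_lt (hbmono j i h))
  -- F of b j is zero
  have hFb : ∀ j : Fin m, F ((b j : ℝ) : ℂ) = 0 := by
    intro j
    rw [hFg, hb3 j]
    exact Complex.ofReal_zero
  -- The polynomial P
  set P : Polynomial ℂ := (∏ i : Fin m, (C ((a i : ℝ) : ℂ) - X))
      + ∑ i : Fin m, C ((c i : ℝ) : ℂ) * ∏ k ∈ univ.erase i, (C ((a k : ℝ) : ℂ) - X)
    with hPdef
  have hPeval : ∀ lam : ℂ, P.eval lam = (∏ i : Fin m, (((a i : ℝ) : ℂ) - lam))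
      + ∑ i : Fin m, ((c i : ℝ) : ℂ) * ∏ k ∈ univ.erase i, (((a k : ℝ) : ℂ) - lam) := by
    intro lam
    simp [hPdef, eval_prod, eval_finset_sum]
  -- P equals F times the product, away from poles
  have hkey : ∀ lam : ℂ, (∀ i : Fin m, lam ≠ ((a i : ℝ) : ℂ)) →
      P.eval lam = F lam * ∏ i : Fin m, (((a i : ℝ) : ℂ) - lam) := by
    intro lam hlam
    rw [hPeval, hF]
    rw [add_mul, one_mul, Finset.sum_mul]
    congr 1
    apply Finset.sum_congr rfl
    intro i _
    have hne : ((a i : ℝ) : ℂ) - lam ≠ 0 := sub_ne_zero.2 (Ne.symm (hlam i))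
    have hprod : (∏ k : Fin m, (((a k : ℝ) : ℂ) - lam))
        = (((a i : ℝ) : ℂ) - lam) * ∏ k ∈ univ.erase i, (((a k : ℝ) : ℂ) - lam) :=
      (Finset.mul_prod_erase univ _ (mem_univ i)).symm
    have hl0' : (l0 : ℂ) ≠ 0 := Complex.ofReal_ne_zero.2 hl0.ne'
    rw [hprod, hcdef]
    push_cast
    field_simp
  -- P is not the zero polynomial: evaluate at a point beyond all poles
  have hPne : P ≠ 0 := by
    have h2 : ∀ᶠ x in atTop, 0 < g x := hinf.eventually (eventually_gt_nhds one_pos)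
    have h3 : ∀ᶠ x : ℝ in atTop, ∀ i : Fin m, a i < x :=
      eventually_all.2 fun i => eventually_gt_atTop (a i)
    obtain ⟨x, hxg, hxa⟩ := (h2.and h3).exists
    intro hP0
    have hne : ∀ i : Fin m, (x : ℂ) ≠ ((a i : ℝ) : ℂ) := by
      intro i h
      exact absurd (Complex.ofReal_injective h) (ne_of_gt (hxa i))
    have := hkey (x : ℂ) hne
    rw [hP0] at this
    simp only [eval_zero] at this
    have hprodne : (∏ i : Fin m, (((a i : ℝ) : ℂ) - (x:ℂ))) ≠ 0 := by
      apply Finset.prod_ne_zero_iff.2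
      intro i _
      exact sub_ne_zero.2 fun h => (hne i) h.symm
    have hFne : F (x : ℂ) ≠ 0 := by
      rw [hFg]
      simpa using ne_of_gt hxg
    exact (mul_ne_zero hFne hprodne) this.symm
  -- degree bound
  have hdeg : P.natDegree ≤ m := by
    rw [hPdef]
    apply le_trans (natDegree_add_le _ _)
    apply max_le
    · apply le_trans (natDegree_prod_le _ _)
      apply le_trans (Finset.sum_le_card_nsmul _ _ 1 _)
      · simp
      · intro i _
        exact le_trans (natDegree_sub_le _ _) (by simp)
    · apply natDegree_sum_le_of_forall_le
      intro i _
      apply le_trans (natDegree_mul_le)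
      rw [natDegree_C, zero_add]
      apply le_trans (natDegree_prod_le _ _)
      apply le_trans (Finset.sum_le_card_nsmul _ _ 1 _)
      · simp [Finset.card_erase_of_mem]
      · intro k _
        exact le_trans (natDegree_sub_le _ _) (by simp)
  -- every zero of F away from poles is a root of P
  have hroot : ∀ lam : ℂ, (∀ i : Fin m, lam ≠ ((a i : ℝ) : ℂ)) → F lam = 0 →
      lam ∈ P.roots := by
    intro lam hlam hF0
    rw [mem_roots hPne]
    rw [IsRoot, hkey lam hlam, hF0, zero_mul]
  refine ⟨b, hb1, hb2, hFb, ?_⟩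
  -- completeness
  intro lam hlam hF0
  by_contra hcon
  push_neg at hcon
  -- the finset of m+1 distinct roots
  have hbroot : ∀ j : Fin m, ((b j : ℝ) : ℂ) ∈ P.roots := by
    intro j
    apply hroot
    · intro i h
      exact absurd (Complex.ofReal_injective h).symm (hbne j i)
    · exact hFb j
  set T : Finset ℂ := insert lam (Finset.image (fun j : Fin m => ((b j : ℝ) : ℂ)) univ)
    with hTdef
  have hinj : Function.Injective (fun j : Fin m => ((b j : ℝ) : ℂ)) :=
    fun i j h => hbinj (Complex.ofReal_injective h)
  have hlamnot : lam ∉ Finset.image (fun j : Fin m => ((b j : ℝ) : ℂ)) univ := by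
    simp only [Finset.mem_image, mem_univ, true_and]
    rintro ⟨j, hj⟩
    exact hcon j hj.symm
  have hTcard : T.card = m + 1 := by
    rw [hTdef, Finset.card_insert_of_notMem hlamnot,
      Finset.card_image_of_injective _ hinj, Finset.card_univ, Fintype.card_fin]
  have hTsub : T ⊆ P.roots.toFinset := by
    intro z hz
    rw [Multiset.mem_toFinset]
    rcases Finset.mem_insert.1 hz with h | h
    · rw [h]; exact hroot lam hlam hF0
    · obtain ⟨j, _, hj⟩ := Finset.mem_image.1 h
      rw [← hj]; exact hbroot j
  have hcount : T.card ≤ m := by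
    calc T.card ≤ P.roots.toFinset.card := Finset.card_le_card hTsub
      _ ≤ Multiset.card P.roots := Multiset.toFinset_card_le _
      _ ≤ P.natDegree := P.card_roots' 
      _ ≤ m := hdeg
  rw [hTcard] at hcount
  exact absurd hcount (by omega)
end

section
/- Let S be a subset of {1, ..., m}. Then the principal minor of A over the index set {0} ∪ S (i.e. the determinant of the submatrix of A obtained by keeping the rows and columns with indices in {0} ∪ S) equals (l_0^{-1} Σ_{j ∈ {1,...,m} \ S} q_j N_j) · Π_{s ∈ S} (q_s N_s l_s^{-1}). -/
open Matrix

/-- For `S ⊆ {1, ..., m}` the principal minor of `A` over the index set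
`{0} ∪ S` equals `(l 0)⁻¹ (∑_{j ∉ S} q j N j) · ∏_{s ∈ S} q s N s (l s)⁻¹`. -/
theorem principal_minor_with_zero
    (m : ℕ) (hm : 1 ≤ m)
    (l : Fin (m + 1) → ℝ) (hl : ∀ i, 0 < l i)
    (q : Fin m → ℝ) (hq : ∀ j, 0 < q j)
    (N : Fin m → ℕ) (hN : ∀ j, 0 < N j)
    (A : Matrix (Fin (m + 1)) (Fin (m + 1)) ℝ)
    (hA00 : A 0 0 = (l 0)⁻¹ * ∑ j : Fin m, q j * (N j : ℝ))
    (hA0j : ∀ j : Fin m, A 0 j.succ = -(l 0)⁻¹ * (q j * (N j : ℝ)))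
    (hAj0 : ∀ j : Fin m, A j.succ 0 = -(l j.succ)⁻¹ * (q j * (N j : ℝ)))
    (hAjj : ∀ j : Fin m, A j.succ j.succ = (l j.succ)⁻¹ * (q j * (N j : ℝ)))
    (hAjk : ∀ j k : Fin m, j ≠ k → A j.succ k.succ = 0)
    (S : Finset (Fin m))
    (T : Finset (Fin (m + 1)))
    (hT : T = insert 0 (S.map ⟨Fin.succ, Fin.succ_injective m⟩)) :
    Matrix.det (A.submatrix
        (fun i : {x : Fin (m + 1) // x ∈ T} => (i : Fin (m + 1)))
        (fun j : {x : Fin (m + 1) // x ∈ T} => (j : Fin (m + 1))))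
      = ((l 0)⁻¹ * ∑ j ∈ Sᶜ, q j * (N j : ℝ)) * ∏ s ∈ S, q s * (N s : ℝ) * (l s.succ)⁻¹ := by
  classical
  -- the bijection between `Unit ⊕ S` and the subtype of `T`
  set c : {x : Fin (m + 1) // x ∈ T} → Fin (m + 1) := fun i => (i : Fin (m + 1)) with hc
  have h0T : (0 : Fin (m + 1)) ∈ T := by simp [hT]
  have hsT : ∀ j : {x : Fin m // x ∈ S}, (j : Fin m).succ ∈ T := by
    intro j
    simp only [hT, Finset.mem_insert, Finset.mem_map, Function.Embedding.coeFn_mk]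
    exact Or.inr ⟨j.1, j.2, rfl⟩
  set f : Unit ⊕ {x : Fin m // x ∈ S} → {x : Fin (m + 1) // x ∈ T} :=
    Sum.elim (fun _ => ⟨0, h0T⟩) (fun j => ⟨(j : Fin m).succ, hsT j⟩) with hf
  have hbij : Function.Bijective f := by
    constructor
    · rintro (⟨⟩ | ⟨j, hj⟩) (⟨⟩ | ⟨k, hk⟩) h <;>
        simp only [hf, Sum.elim_inl, Sum.elim_inr, Subtype.mk.injEq] at h
      · rfl
      · exact absurd h.symm (Fin.succ_ne_zero k)
      · exact absurd h (Fin.succ_ne_zero j)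
      · simp [Fin.succ_injective _ h]
    · rintro ⟨x, hx⟩
      rw [hT] at hx
      rcases Finset.mem_insert.mp hx with h0 | hmem
      · exact ⟨Sum.inl (), by simp [hf, h0]⟩
      · obtain ⟨j, hj, rfl⟩ := Finset.mem_map.mp hmem
        exact ⟨Sum.inr ⟨j, hj⟩, by simp [hf]⟩
  set e := Equiv.ofBijective f hbij with he
  have hdet : (A.submatrix c c).det = (A.submatrix (c ∘ e) (c ∘ e)).det := by
    rw [← Matrix.submatrix_submatrix, Matrix.det_submatrix_equiv_self]
  set d : {x : Fin m // x ∈ S} → ℝ := fun j => (l (j : Fin m).succ)⁻¹ * (q j * (N j : ℝ))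
    with hd
  have hdpos : ∀ j, 0 < d j := fun j => by
    have := hl ((j : Fin m)).succ
    have := hq (j : Fin m)
    have := hN (j : Fin m)
    positivity
  have hblk : A.submatrix (c ∘ e) (c ∘ e) =
      Matrix.fromBlocks
        (Matrix.of fun _ _ : Unit => A 0 0)
        (Matrix.of fun (_ : Unit) (j : {x : Fin m // x ∈ S}) => -(l 0)⁻¹ * (q j * (N j : ℝ)))
        (Matrix.of fun (j : {x : Fin m // x ∈ S}) (_ : Unit) => -(l (j : Fin m).succ)⁻¹ * (q j * (N j : ℝ)))
        (Matrix.diagonal d) := by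
    ext i j
    rcases i with (⟨⟩ | ⟨i, hi⟩) <;> rcases j with (⟨⟩ | ⟨j, hj⟩) <;>
      simp only [Matrix.submatrix_apply, Function.comp_apply, he, Equiv.ofBijective_apply,
        hf, Sum.elim_inl, Sum.elim_inr, Matrix.fromBlocks_apply₁₁, Matrix.fromBlocks_apply₁₂,
        Matrix.fromBlocks_apply₂₁, Matrix.fromBlocks_apply₂₂, Matrix.of_apply, hc]
    · exact hA0j j
    · exact hAj0 i
    · by_cases hij : i = j
      · subst hij
        simp [Matrix.diagonal, hd, hAjj i]
      · have : (⟨i, hi⟩ : {x : Fin m // x ∈ S}) ≠ ⟨j, hj⟩ := by simpa using hij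
        rw [Matrix.diagonal_apply_ne _ this]
        exact hAjk i j hij
  letI : Invertible d :=
    ⟨fun j => (d j)⁻¹, funext fun j => inv_mul_cancel₀ (hdpos j).ne',
      funext fun j => mul_inv_cancel₀ (hdpos j).ne'⟩
  letI : Invertible (Matrix.diagonal d) := Matrix.diagonalInvertible d
  rw [hdet, hblk, Matrix.det_fromBlocks₂₂, Matrix.invOf_diagonal_eq]
  have hinvd : (⅟d : {x : Fin m // x ∈ S} → ℝ) = fun j => (d j)⁻¹ := rfl
  rw [hinvd]
  -- compute the 1×1 determinant
  rw [Matrix.det_diagonal, Matrix.det_unique]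
  have hentry : (Matrix.of (fun _ _ : Unit => A 0 0) -
      Matrix.of (fun (_ : Unit) (j : {x : Fin m // x ∈ S}) => -(l 0)⁻¹ * (q j * (N j : ℝ))) *
        Matrix.diagonal (fun j => (d j)⁻¹) *
      Matrix.of (fun (j : {x : Fin m // x ∈ S}) (_ : Unit) => -(l (j : Fin m).succ)⁻¹ * (q j * (N j : ℝ))))
      default default
      = (l 0)⁻¹ * ∑ j ∈ Sᶜ, q j * (N j : ℝ) := by
    rw [Matrix.sub_apply, Matrix.mul_apply]
    have : ∀ j : {x : Fin m // x ∈ S},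
        (Matrix.of (fun (_ : Unit) (j : {x : Fin m // x ∈ S}) => -(l 0)⁻¹ * (q j * (N j : ℝ))) *
          Matrix.diagonal (fun j => (d j)⁻¹)) default j *
        Matrix.of (fun (j : {x : Fin m // x ∈ S}) (_ : Unit) => -(l (j : Fin m).succ)⁻¹ * (q j * (N j : ℝ))) j default
        = (l 0)⁻¹ * (q j * (N j : ℝ)) := by
      intro j
      rw [Matrix.mul_diagonal, Matrix.of_apply, Matrix.of_apply]
      have h1 : (l (j : Fin m).succ) ≠ 0 := (hl _).ne'
      have h2 : q (j : Fin m) * (N (j : Fin m) : ℝ) ≠ 0 := by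
        have := hq (j : Fin m); have := hN (j : Fin m); positivity
      rw [hd]
      have hX : (l (j : Fin m).succ)⁻¹ * (q (j : Fin m) * (N (j : Fin m) : ℝ)) ≠ 0 := by
        have := hl ((j : Fin m)).succ
        positivity
      calc -(l 0)⁻¹ * (q (j : Fin m) * (N (j : Fin m) : ℝ)) *
            ((l (j : Fin m).succ)⁻¹ * (q (j : Fin m) * (N (j : Fin m) : ℝ)))⁻¹ *
            (-(l (j : Fin m).succ)⁻¹ * (q (j : Fin m) * (N (j : Fin m) : ℝ)))
          = (l 0)⁻¹ * (q (j : Fin m) * (N (j : Fin m) : ℝ)) *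
            (((l (j : Fin m).succ)⁻¹ * (q (j : Fin m) * (N (j : Fin m) : ℝ)))⁻¹ *
            ((l (j : Fin m).succ)⁻¹ * (q (j : Fin m) * (N (j : Fin m) : ℝ)))) := by ring
        _ = (l 0)⁻¹ * (q (j : Fin m) * (N (j : Fin m) : ℝ)) := by
            rw [inv_mul_cancel₀ hX, mul_one]
    rw [Finset.sum_congr rfl fun j _ => this j, Matrix.of_apply, hA00]
    have hsum : (∑ j : {x : Fin m // x ∈ S}, (l 0)⁻¹ * (q j * (N j : ℝ)))
        = ∑ j ∈ S, (l 0)⁻¹ * (q j * (N j : ℝ)) := Finset.sum_coe_sort S (fun x => (l 0)⁻¹ * (q x * (N x : ℝ)))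
    rw [hsum, ← Finset.mul_sum, ← mul_sub]
    congr 1
    have := Finset.sum_add_sum_compl S (fun j => q j * (N j : ℝ))
    linarith
  rw [hentry]
  have hprod : (∏ j : {x : Fin m // x ∈ S}, d j)
      = ∏ s ∈ S, q s * (N s : ℝ) * (l s.succ)⁻¹ := by
    rw [show (∏ j : {x : Fin m // x ∈ S}, d j)
        = ∏ s ∈ S, (l s.succ)⁻¹ * (q s * (N s : ℝ)) from Finset.prod_coe_sort S (fun x => (l x.succ)⁻¹ * (q x * (N x : ℝ)))]
    exact Finset.prod_congr rfl fun s _ => by ring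
  rw [hprod]
  ring
end

section
/- For every k with 1 ≤ k ≤ m, the k-th elementary symmetric function of the eigenvalues of A, E_k := Σ_{T ⊆ {0,1,...,m}, |T| = k} det(A_T) (the sum of all k×k principal minors of A, where A_T denotes the submatrix of A with rows and columns indexed by T), satisfies E_k = Σ_{S ⊆ {1,...,m}, |S| = k} (Π_{s ∈ S} a_s) · (1 + l_0^{-1} Σ_{s ∈ S} l_s), where a_j := N_j q_j / l_j. -/
open Matrix

private lemma det_arrowhead {ι : Type*} [Fintype ι] [DecidableEq ι]
    (α : ℝ) (b c d : ι → ℝ) (hd : ∀ i, d i ≠ 0) :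
    (Matrix.fromBlocks (Matrix.of fun _ _ : Fin 1 => α)
      (Matrix.of fun (_ : Fin 1) j => b j) (Matrix.of fun i (_ : Fin 1) => c i)
      (Matrix.diagonal d)).det
      = (∏ i, d i) * (α - ∑ i, b i * c i / d i) := by
  letI hinv : Invertible (Matrix.diagonal d) :=
    ⟨Matrix.diagonal (fun i => (d i)⁻¹), by
      rw [Matrix.diagonal_mul_diagonal]
      convert Matrix.diagonal_one using 2
      funext i; exact inv_mul_cancel₀ (hd _), by
      rw [Matrix.diagonal_mul_diagonal]
      convert Matrix.diagonal_one using 2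
      funext i; exact mul_inv_cancel₀ (hd _)⟩
  rw [Matrix.det_fromBlocks₂₂, Matrix.det_diagonal]
  congr 1
  have hiof : (⅟(Matrix.diagonal d) : Matrix ι ι ℝ) = Matrix.diagonal (fun i => (d i)⁻¹) := rfl
  rw [Matrix.det_fin_one]
  simp [hiof, Matrix.mul_apply, Matrix.diagonal_apply, Finset.mul_sum, div_eq_mul_inv]
  congr 1
  ext i
  ring

private lemma pair_swap {m k : ℕ} (g w : Fin m → ℝ) :
    ∑ S ∈ Finset.powersetCard k (Finset.univ : Finset (Fin m)),
        (∏ s ∈ S, g s) * (∑ j ∈ Sᶜ, g j * w j)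
    = ∑ S ∈ Finset.powersetCard (k+1) (Finset.univ : Finset (Fin m)),
        (∏ s ∈ S, g s) * (∑ j ∈ S, w j) := by
  simp_rw [Finset.mul_sum]
  rw [Finset.sum_sigma' (Finset.powersetCard k (Finset.univ : Finset (Fin m))) (fun S => Sᶜ)
      (fun S j => (∏ s ∈ S, g s) * (g j * w j)),
    Finset.sum_sigma' (Finset.powersetCard (k+1) (Finset.univ : Finset (Fin m))) (fun S => S)
      (fun S j => (∏ s ∈ S, g s) * w j)]
  refine Finset.sum_nbij' (fun x => ⟨insert x.2 x.1, x.2⟩) (fun x => ⟨x.1.erase x.2, x.2⟩)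
    ?_ ?_ ?_ ?_ ?_
  · rintro ⟨S, j⟩ hx
    simp only [Finset.mem_sigma, Finset.mem_powersetCard_univ, Finset.mem_compl] at hx ⊢
    exact ⟨by rw [Finset.card_insert_of_notMem hx.2, hx.1], Finset.mem_insert_self _ _⟩
  · rintro ⟨S, j⟩ hx
    simp only [Finset.mem_sigma, Finset.mem_powersetCard_univ, Finset.mem_compl] at hx ⊢
    exact ⟨by rw [Finset.card_erase_of_mem hx.2, hx.1]; rfl, Finset.notMem_erase _ _⟩
  · rintro ⟨S, j⟩ hx
    simp only [Finset.mem_sigma, Finset.mem_powersetCard_univ, Finset.mem_compl] at hx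
    simp [Finset.erase_insert hx.2]
  · rintro ⟨S, j⟩ hx
    simp only [Finset.mem_sigma, Finset.mem_powersetCard_univ, Finset.mem_compl] at hx
    simp [Finset.insert_erase hx.2]
  · rintro ⟨S, j⟩ hx
    simp only [Finset.mem_sigma, Finset.mem_powersetCard_univ, Finset.mem_compl] at hx
    rw [Finset.prod_insert hx.2]
    ring

private lemma det_submatrix_diag {n : ℕ} (M : Matrix (Fin n) (Fin n) ℝ) (T : Finset (Fin n))
    (h : ∀ i ∈ T, ∀ j ∈ T, i ≠ j → M i j = 0) :
    (M.submatrix (fun i : {x // x ∈ T} => (i : Fin n))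
      (fun j : {x // x ∈ T} => (j : Fin n))).det = ∏ i ∈ T, M i i := by
  have hM : M.submatrix (fun i : {x // x ∈ T} => (i : Fin n))
      (fun j : {x // x ∈ T} => (j : Fin n))
      = Matrix.diagonal (fun i : {x // x ∈ T} => M i i) := by
    ext ⟨i, hi⟩ ⟨j, hj⟩
    by_cases hij : i = j
    · subst hij; simp
    · rw [Matrix.diagonal_apply_ne _ (fun hc => hij (congrArg Subtype.val hc))]
      exact h i hi j hj hij
  rw [hM, Matrix.det_diagonal]
  exact Finset.prod_coe_sort T (fun i => M i i)

/-- For `1 ≤ k ≤ m`, the sum `E_k` of all `k × k` principal minors of `A`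
equals `∑_{S ⊆ {1,...,m}, |S| = k} (∏_{s ∈ S} a s) (1 + l 0⁻¹ ∑_{s ∈ S} l s)`, where
`a j = N j q j / l j`. -/
theorem elementary_symmetric_of_eigenvalues
    (m : ℕ) (hm : 1 ≤ m)
    (l : Fin (m + 1) → ℝ) (hl : ∀ i, 0 < l i)
    (q : Fin m → ℝ) (hq : ∀ j, 0 < q j)
    (N : Fin m → ℕ) (hN : ∀ j, 0 < N j)
    (a : Fin m → ℝ) (ha : ∀ j, a j = (N j : ℝ) * q j / l j.succ)
    (A : Matrix (Fin (m + 1)) (Fin (m + 1)) ℝ)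
    (hA00 : A 0 0 = (l 0)⁻¹ * ∑ j : Fin m, q j * (N j : ℝ))
    (hA0j : ∀ j : Fin m, A 0 j.succ = -(l 0)⁻¹ * (q j * (N j : ℝ)))
    (hAj0 : ∀ j : Fin m, A j.succ 0 = -(l j.succ)⁻¹ * (q j * (N j : ℝ)))
    (hAjj : ∀ j : Fin m, A j.succ j.succ = (l j.succ)⁻¹ * (q j * (N j : ℝ)))
    (hAjk : ∀ j k : Fin m, j ≠ k → A j.succ k.succ = 0)
    (k : ℕ) (hk1 : 1 ≤ k) (hkm : k ≤ m) :
    ∑ T ∈ Finset.powersetCard k (Finset.univ : Finset (Fin (m + 1))),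
        Matrix.det (A.submatrix
          (fun i : {x : Fin (m + 1) // x ∈ T} => (i : Fin (m + 1)))
          (fun j : {x : Fin (m + 1) // x ∈ T} => (j : Fin (m + 1))))
      = ∑ S ∈ Finset.powersetCard k (Finset.univ : Finset (Fin m)),
          ((∏ s ∈ S, a s) * (1 + (l 0)⁻¹ * ∑ s ∈ S, l s.succ)) := by
  obtain ⟨k', rfl⟩ : ∃ k', k = k' + 1 := ⟨k - 1, (Nat.succ_pred_eq_of_pos hk1).symm⟩
  have hl0 : (l 0 : ℝ) ≠ 0 := (hl 0).ne'
  have hls : ∀ j : Fin m, l j.succ ≠ 0 := fun j => (hl j.succ).ne'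
  have hqN : ∀ j : Fin m, q j * (N j : ℝ) ≠ 0 := fun j =>
    (mul_pos (hq j) (by exact_mod_cast hN j)).ne'
  have haj : ∀ j : Fin m, a j = (l j.succ)⁻¹ * (q j * (N j : ℝ)) := by
    intro j; rw [ha j]; field_simp
  have hsucc0 : ∀ s : Fin m, (Fin.succEmb m) s ≠ 0 := fun s => Fin.succ_ne_zero s
  -- membership facts
  have hmap0 : ∀ S : Finset (Fin m), (0 : Fin (m+1)) ∉ S.map (Fin.succEmb m) := by
    intro S h0
    obtain ⟨s, _, hs⟩ := Finset.mem_map.mp h0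
    exact Fin.succ_ne_zero s hs
  -- diagonal case
  have hdiag : ∀ S : Finset (Fin m),
      (A.submatrix (fun i : {x : Fin (m+1) // x ∈ S.map (Fin.succEmb m)} => (i : Fin (m+1)))
        (fun j : {x : Fin (m+1) // x ∈ S.map (Fin.succEmb m)} => (j : Fin (m+1)))).det
      = ∏ s ∈ S, a s := by
    intro S
    rw [det_submatrix_diag]
    · rw [Finset.prod_map]
      refine Finset.prod_congr rfl fun s _ => ?_
      show A s.succ s.succ = a s
      rw [hAjj s, haj s]
    · intro i hi j hj hij
      obtain ⟨s, _, rfl⟩ := Finset.mem_map.mp hi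
      obtain ⟨t, _, rfl⟩ := Finset.mem_map.mp hj
      exact hAjk s t (fun h => hij (congrArg (Fin.succEmb m) h))
  -- arrowhead case
  have harrow : ∀ S : Finset (Fin m),
      (A.submatrix
        (fun i : {x : Fin (m+1) // x ∈ insert 0 (S.map (Fin.succEmb m))} => (i : Fin (m+1)))
        (fun j : {x : Fin (m+1) // x ∈ insert 0 (S.map (Fin.succEmb m))} => (j : Fin (m+1)))).det
      = (∏ s ∈ S, a s) * ((l 0)⁻¹ * ∑ j ∈ Sᶜ, q j * (N j : ℝ)) := by
    intro S
    set T := insert (0 : Fin (m+1)) (S.map (Fin.succEmb m)) with hT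
    have h0T : (0 : Fin (m+1)) ∈ T := Finset.mem_insert_self _ _
    have hmem : ∀ s : Fin m, s ∈ S → s.succ ∈ T := fun s hs =>
      Finset.mem_insert_of_mem (Finset.mem_map_of_mem _ hs)
    let f : Fin 1 ⊕ {x : Fin m // x ∈ S} → {x : Fin (m+1) // x ∈ T} :=
      fun x => Sum.rec (fun _ => ⟨0, h0T⟩) (fun s => ⟨(s : Fin m).succ, hmem s s.2⟩) x
    have hfinj : Function.Injective f := by
      rintro (i | ⟨s, hs⟩) (j | ⟨t, ht⟩) h
      · rw [Subsingleton.elim i j]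
      · exact absurd (congrArg Subtype.val h) (Ne.symm (Fin.succ_ne_zero t))
      · exact absurd (congrArg Subtype.val h) (Fin.succ_ne_zero s)
      · have := Fin.succ_injective m (congrArg Subtype.val h)
        exact congrArg Sum.inr (Subtype.ext this)
    have hcard : Fintype.card (Fin 1 ⊕ {x : Fin m // x ∈ S})
        = Fintype.card {x : Fin (m+1) // x ∈ T} := by
      simp only [Fintype.card_sum, Fintype.card_fin, Fintype.card_coe, hT,
        Finset.card_insert_of_notMem (hmap0 S), Finset.card_map]
      omega
    let e : Fin 1 ⊕ {x : Fin m // x ∈ S} ≃ {x : Fin (m+1) // x ∈ T} :=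
      Equiv.ofBijective f ((Fintype.bijective_iff_injective_and_card f).2 ⟨hfinj, hcard⟩)
    rw [← Matrix.det_submatrix_equiv_self e]
    have hblock : ((A.submatrix
        (fun i : {x : Fin (m+1) // x ∈ T} => (i : Fin (m+1)))
        (fun j : {x : Fin (m+1) // x ∈ T} => (j : Fin (m+1)))).submatrix e e)
        = Matrix.fromBlocks (Matrix.of fun _ _ : Fin 1 => A 0 0)
          (Matrix.of fun (_ : Fin 1) (t : {x : Fin m // x ∈ S}) => -(l 0)⁻¹ * (q t * (N t : ℝ)))
          (Matrix.of fun (s : {x : Fin m // x ∈ S}) (_ : Fin 1) =>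
            -(l (s : Fin m).succ)⁻¹ * (q s * (N s : ℝ)))
          (Matrix.diagonal fun s : {x : Fin m // x ∈ S} =>
            (l (s : Fin m).succ)⁻¹ * (q s * (N s : ℝ))) := by
      ext i j
      cases i with
      | inl i =>
        cases j with
        | inl j => rfl
        | inr t => exact hA0j t
      | inr s =>
        cases j with
        | inl j => exact hAj0 s
        | inr t =>
          simp only [Matrix.fromBlocks_apply₂₂]
          by_cases hst : s = t
          · subst hst
            rw [Matrix.diagonal_apply_eq]
            exact hAjj s
          · rw [Matrix.diagonal_apply_ne _ hst]
            exact hAjk s t (fun h => hst (Subtype.ext h))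
    rw [hblock, det_arrowhead (A 0 0)
      (fun t : {x : Fin m // x ∈ S} => -(l 0)⁻¹ * (q t * (N t : ℝ)))
      (fun s : {x : Fin m // x ∈ S} => -(l (s : Fin m).succ)⁻¹ * (q s * (N s : ℝ)))
      (fun s : {x : Fin m // x ∈ S} => (l (s : Fin m).succ)⁻¹ * (q s * (N s : ℝ)))
      (fun s => mul_ne_zero (inv_ne_zero (hls s)) (hqN s))]
    have h1 : (∏ s : {x : Fin m // x ∈ S}, (l (s : Fin m).succ)⁻¹ * (q s * (N s : ℝ)))
        = ∏ s ∈ S, a s := by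
      rw [Finset.prod_coe_sort S (fun s => (l s.succ)⁻¹ * (q s * (N s : ℝ)))]
      exact Finset.prod_congr rfl fun s _ => (haj s).symm
    have h2 : (∑ s : {x : Fin m // x ∈ S},
        (-(l 0)⁻¹ * (q s * (N s : ℝ))) * (-(l (s : Fin m).succ)⁻¹ * (q s * (N s : ℝ)))
          / ((l (s : Fin m).succ)⁻¹ * (q s * (N s : ℝ))))
        = ∑ s ∈ S, (l 0)⁻¹ * (q s * (N s : ℝ)) := by
      rw [Finset.sum_coe_sort S (fun s => (-(l 0)⁻¹ * (q s * (N s : ℝ)))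
        * (-(l s.succ)⁻¹ * (q s * (N s : ℝ))) / ((l s.succ)⁻¹ * (q s * (N s : ℝ))))]
      refine Finset.sum_congr rfl fun s _ => ?_
      rw [div_eq_iff (mul_ne_zero (inv_ne_zero (hls s)) (hqN s))]
      ring
    rw [h1, h2, hA00]
    rw [← Finset.mul_sum, ← mul_sub, ← Finset.sum_compl_add_sum S (fun j => q j * (N j : ℝ))]
    ring
  classical
  rw [← Finset.sum_filter_add_sum_filter_not
      (Finset.powersetCard (k'+1) (Finset.univ : Finset (Fin (m+1))))
      (fun T => (0 : Fin (m+1)) ∈ T)]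
  have hpart1 : (∑ T ∈ (Finset.powersetCard (k'+1)
        (Finset.univ : Finset (Fin (m+1)))).filter (fun T => (0 : Fin (m+1)) ∈ T),
      Matrix.det (A.submatrix (fun i : {x : Fin (m+1) // x ∈ T} => (i : Fin (m+1)))
        (fun j : {x : Fin (m+1) // x ∈ T} => (j : Fin (m+1)))))
      = ∑ S ∈ Finset.powersetCard k' (Finset.univ : Finset (Fin m)),
          (∏ s ∈ S, a s) * ((l 0)⁻¹ * ∑ j ∈ Sᶜ, q j * (N j : ℝ)) := by
    refine (Finset.sum_bij
      (fun S _ => insert (0 : Fin (m+1)) (S.map (Fin.succEmb m))) ?_ ?_ ?_ ?_).symm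
    · intro S hS
      rw [Finset.mem_powersetCard_univ] at hS
      rw [Finset.mem_filter]
      refine ⟨Finset.mem_powersetCard_univ.mpr ?_, Finset.mem_insert_self _ _⟩
      rw [Finset.card_insert_of_notMem (hmap0 S), Finset.card_map, hS]
    · intro S1 h1 S2 h2 heq
      have := congrArg (fun t => Finset.erase t (0 : Fin (m+1))) heq
      simp only [Finset.erase_insert (hmap0 S1), Finset.erase_insert (hmap0 S2)] at this
      exact Finset.map_injective _ this
    · intro T hT
      rw [Finset.mem_filter, Finset.mem_powersetCard_univ] at hT
      obtain ⟨hcard, h0T⟩ := hT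
      set S := Finset.univ.filter (fun j : Fin m => j.succ ∈ T) with hSdef
      have hTS : insert (0 : Fin (m+1)) (S.map (Fin.succEmb m)) = T := by
        ext x
        refine Fin.cases ?_ (fun j => ?_) x
        · simp [h0T]
        · simp only [Finset.mem_insert, Finset.mem_map]
          constructor
          · rintro (h | ⟨t, ht, hts⟩)
            · exact absurd h (Fin.succ_ne_zero j)
            · have : t = j := Fin.succ_injective m hts
              subst this
              exact (Finset.mem_filter.mp ht).2
          · intro h
            exact Or.inr ⟨j, Finset.mem_filter.mpr ⟨Finset.mem_univ _, h⟩, rfl⟩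
      refine ⟨S, ?_, hTS⟩
      rw [Finset.mem_powersetCard_univ]
      have hc := congrArg Finset.card hTS
      rw [Finset.card_insert_of_notMem (hmap0 S), Finset.card_map, hcard] at hc
      omega
    · intro S hS
      exact (harrow S).symm
  have hpart2 : (∑ T ∈ (Finset.powersetCard (k'+1)
        (Finset.univ : Finset (Fin (m+1)))).filter (fun T => ¬ (0 : Fin (m+1)) ∈ T),
      Matrix.det (A.submatrix (fun i : {x : Fin (m+1) // x ∈ T} => (i : Fin (m+1)))
        (fun j : {x : Fin (m+1) // x ∈ T} => (j : Fin (m+1)))))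
      = ∑ S ∈ Finset.powersetCard (k'+1) (Finset.univ : Finset (Fin m)),
          ∏ s ∈ S, a s := by
    refine (Finset.sum_bij (fun S _ => S.map (Fin.succEmb m)) ?_ ?_ ?_ ?_).symm
    · intro S hS
      rw [Finset.mem_powersetCard_univ] at hS
      rw [Finset.mem_filter]
      exact ⟨Finset.mem_powersetCard_univ.mpr (by rw [Finset.card_map, hS]), hmap0 S⟩
    · intro S1 h1 S2 h2 heq
      exact Finset.map_injective _ heq
    · intro T hT
      rw [Finset.mem_filter, Finset.mem_powersetCard_univ] at hT
      obtain ⟨hcard, h0T⟩ := hT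
      set S := Finset.univ.filter (fun j : Fin m => j.succ ∈ T) with hSdef
      have hTS : S.map (Fin.succEmb m) = T := by
        ext x
        refine Fin.cases ?_ (fun j => ?_) x
        · simp only [Finset.mem_map]
          constructor
          · rintro ⟨t, ht, hts⟩
            exact absurd hts (Fin.succ_ne_zero t)
          · intro h
            exact absurd h h0T
        · simp only [Finset.mem_map]
          constructor
          · rintro ⟨t, ht, hts⟩
            have : t = j := Fin.succ_injective m hts
            subst this
            exact (Finset.mem_filter.mp ht).2
          · intro h
            exact ⟨j, Finset.mem_filter.mpr ⟨Finset.mem_univ _, h⟩, rfl⟩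
      refine ⟨S, ?_, hTS⟩
      rw [Finset.mem_powersetCard_univ]
      have hc := congrArg Finset.card hTS
      rw [Finset.card_map, hcard] at hc
      exact hc
    · intro S hS
      exact (hdiag S).symm
  rw [hpart1, hpart2]
  have hqNa : ∀ j : Fin m, q j * (N j : ℝ) = a j * l j.succ := by
    intro j
    rw [haj j, mul_comm ((l j.succ)⁻¹) (q j * (N j : ℝ)), mul_assoc,
      inv_mul_cancel₀ (hls j), mul_one]
  have key : (∑ S ∈ Finset.powersetCard k' (Finset.univ : Finset (Fin m)),
      (∏ s ∈ S, a s) * ((l 0)⁻¹ * ∑ j ∈ Sᶜ, q j * (N j : ℝ)))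
      = (l 0)⁻¹ * ∑ S ∈ Finset.powersetCard (k'+1) (Finset.univ : Finset (Fin m)),
          (∏ s ∈ S, a s) * (∑ j ∈ S, l j.succ) := by
    rw [← pair_swap a (fun j => l j.succ), Finset.mul_sum]
    refine Finset.sum_congr rfl fun S _ => ?_
    rw [Finset.sum_congr rfl (fun j (_ : j ∈ Sᶜ) => hqNa j)]
    ring
  rw [key, Finset.mul_sum]
  simp only [mul_add, mul_one, Finset.sum_add_distrib]
  rw [add_comm]
  congr 1
  exact Finset.sum_congr rfl fun S _ => by ring
end

section
/- For every λ ∈ ℂ with λ ∉ {a_1, ..., a_m}, the characteristic determinant of A satisfies det(A − λ·I) = −λ · (Π_{j=1}^m (a_j − λ)) · F(λ), where a_j := N_j q_j / l_j and F(λ) := 1 + Σ_{i=1}^m a_i l_i / (l_0 (a_i − λ)). -/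
open Matrix

/-- The equivalence `Fin 1 ⊕ Fin m ≃ Fin (m+1)` sending `inl 0` to `0` and `inr j` to `j.succ`. -/
def arrowEquiv (m : ℕ) : Fin 1 ⊕ Fin m ≃ Fin (m + 1) where
  toFun := Sum.elim (fun _ => 0) Fin.succ
  invFun := Fin.cases (Sum.inl 0) Sum.inr
  left_inv := by rintro (⟨_, _⟩ | j) <;> simp [Fin.fin_one_eq_zero]
  right_inv := by
    refine Fin.cases ?_ ?_ <;> simp

/-- For `λ ∉ {a 1, ..., a m}` one has
`det(A - λ·I) = -λ · (∏ j (a j - λ)) · F(λ)`. -/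
theorem char_det_formula
    (m : ℕ) (hm : 1 ≤ m)
    (l : Fin (m + 1) → ℝ) (hl : ∀ i, 0 < l i)
    (q : Fin m → ℝ) (hq : ∀ j, 0 < q j)
    (N : Fin m → ℕ) (hN : ∀ j, 0 < N j)
    (a : Fin m → ℝ) (ha : ∀ j, a j = (N j : ℝ) * q j / l j.succ)
    (F : ℂ → ℂ)
    (hF : ∀ lam : ℂ, F lam = 1 + ∑ i : Fin m,
      ((a i : ℂ) * (l i.succ : ℂ)) / ((l 0 : ℂ) * ((a i : ℂ) - lam)))
    (A : Matrix (Fin (m + 1)) (Fin (m + 1)) ℝ)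
    (hA00 : A 0 0 = (l 0)⁻¹ * ∑ j : Fin m, q j * (N j : ℝ))
    (hA0j : ∀ j : Fin m, A 0 j.succ = -(l 0)⁻¹ * (q j * (N j : ℝ)))
    (hAj0 : ∀ j : Fin m, A j.succ 0 = -(l j.succ)⁻¹ * (q j * (N j : ℝ)))
    (hAjj : ∀ j : Fin m, A j.succ j.succ = (l j.succ)⁻¹ * (q j * (N j : ℝ)))
    (hAjk : ∀ j k : Fin m, j ≠ k → A j.succ k.succ = 0)
    (lam : ℂ) (hlam : ∀ i : Fin m, lam ≠ (a i : ℂ)) :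
    Matrix.det ((A.map Complex.ofReal) - lam • 1)
      = -lam * (∏ j : Fin m, ((a j : ℂ) - lam)) * F lam := by
  set M : Matrix (Fin (m + 1)) (Fin (m + 1)) ℂ := (A.map Complex.ofReal) - lam • 1 with hM
  -- nonzero facts
  have hl0 : (l 0 : ℂ) ≠ 0 := Complex.ofReal_ne_zero.mpr (hl 0).ne'
  have hls : ∀ j : Fin m, (l j.succ : ℂ) ≠ 0 :=
    fun j => Complex.ofReal_ne_zero.mpr (hl j.succ).ne'
  have hd : ∀ j : Fin m, (a j : ℂ) - lam ≠ 0 :=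
    fun j => sub_ne_zero.mpr (fun h => hlam j h.symm)
  -- blocks
  set d : Fin m → ℂ := fun j => (a j : ℂ) - lam with hdd
  set B : Matrix (Fin 1) (Fin m) ℂ := Matrix.of fun _ j => -((l 0 : ℂ))⁻¹ * ((q j : ℂ) * (N j : ℂ)) with hB
  set C : Matrix (Fin m) (Fin 1) ℂ := Matrix.of fun j _ => -((l j.succ : ℂ))⁻¹ * ((q j : ℂ) * (N j : ℂ)) with hC
  set A₁ : Matrix (Fin 1) (Fin 1) ℂ := Matrix.of fun _ _ =>
    ((l 0 : ℂ))⁻¹ * (∑ j : Fin m, (q j : ℂ) * (N j : ℂ)) - lam with hA₁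
  have hMeq : M.submatrix (arrowEquiv m) (arrowEquiv m) = Matrix.fromBlocks A₁ B C (Matrix.diagonal d) := by
    ext i j
    rcases i with i | i <;> rcases j with j | j
    · simp only [Matrix.submatrix_apply, arrowEquiv, Equiv.coe_fn_mk, Sum.elim_inl,
        Matrix.fromBlocks_apply₁₁, hM, Matrix.sub_apply, Matrix.map_apply, Matrix.smul_apply,
        Matrix.one_apply_eq, smul_eq_mul, mul_one, hA00, hA₁, Matrix.of_apply]
      push_cast
      ring
    · simp only [Matrix.submatrix_apply, arrowEquiv, Equiv.coe_fn_mk, Sum.elim_inl, Sum.elim_inr,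
        Matrix.fromBlocks_apply₁₂, hM, Matrix.sub_apply, Matrix.map_apply, Matrix.smul_apply,
        smul_eq_mul, hA0j j, hB, Matrix.of_apply]
      rw [Matrix.one_apply_ne (by exact (Fin.succ_ne_zero j).symm)]
      push_cast
      ring
    · simp only [Matrix.submatrix_apply, arrowEquiv, Equiv.coe_fn_mk, Sum.elim_inl, Sum.elim_inr,
        Matrix.fromBlocks_apply₂₁, hM, Matrix.sub_apply, Matrix.map_apply, Matrix.smul_apply,
        smul_eq_mul, hAj0 i, hC, Matrix.of_apply]
      rw [Matrix.one_apply_ne (Fin.succ_ne_zero i)]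
      push_cast
      ring
    · simp only [Matrix.submatrix_apply, arrowEquiv, Equiv.coe_fn_mk, Sum.elim_inr,
        Matrix.fromBlocks_apply₂₂, hM, Matrix.sub_apply, Matrix.map_apply, Matrix.smul_apply,
        smul_eq_mul, Matrix.diagonal_apply]
      by_cases h : i = j
      · subst h
        simp [hAjj i, Matrix.one_apply_eq, hdd, ha i]
        rw [div_eq_mul_inv]
        push_cast
        ring
      · rw [Matrix.one_apply_ne (by simpa using h), hAjk i j h]
        simp [h]
  have hDdet : (Matrix.diagonal d).det ≠ 0 := by
    rw [Matrix.det_diagonal]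
    exact Finset.prod_ne_zero_iff.mpr fun j _ => hd j
  haveI : Invertible (Matrix.diagonal d) := (Matrix.diagonal d).invertibleOfIsUnitDet hDdet.isUnit
  have hdet : M.det = (Matrix.fromBlocks A₁ B C (Matrix.diagonal d)).det := by
    rw [← hMeq, Matrix.det_submatrix_equiv_self]
  rw [hdet, Matrix.det_fromBlocks₂₂]
  -- compute inverse of diagonal
  have hinv : (Matrix.diagonal d)⁻¹ = Matrix.diagonal (fun j => (d j)⁻¹) := by
    rw [Matrix.inv_diagonal]
    exact congrArg Matrix.diagonal <| Ring.inverse_unit (Units.mk d (fun j => (d j)⁻¹)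
      (funext fun j => mul_inv_cancel₀ (hd j)) (funext fun j => inv_mul_cancel₀ (hd j)))
  rw [Matrix.invOf_eq_nonsing_inv, hinv, Matrix.det_diagonal]
  -- the 1×1 determinant
  have h11 : (A₁ - B * Matrix.diagonal (fun j => (d j)⁻¹) * C).det
      = A₁ 0 0 - ∑ j : Fin m, B 0 j * (d j)⁻¹ * C j 0 := by
    rw [Matrix.det_fin_one]
    simp [Matrix.sub_apply, Matrix.mul_apply, Matrix.diagonal_apply, Finset.mul_sum, Finset.sum_mul]
  rw [h11, hF]
  have hA100 : A₁ 0 0 = ((l 0 : ℂ))⁻¹ * (∑ j : Fin m, (q j : ℂ) * (N j : ℂ)) - lam := rfl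
  rw [hA100]
  have key : ∀ j : Fin m,
      ((l 0 : ℂ))⁻¹ * ((q j : ℂ) * (N j : ℂ))
        - B 0 j * (d j)⁻¹ * C j 0
        + lam * (((a j : ℂ) * (l j.succ : ℂ)) / ((l 0 : ℂ) * ((a j : ℂ) - lam))) = 0 := by
    intro j
    have hqn : (q j : ℂ) * (N j : ℂ) = (a j : ℂ) * (l j.succ : ℂ) := by
      rw [ha j]
      push_cast
      rw [div_mul_cancel₀ _ (hls j)]
      ring
    have e1 : (l j.succ : ℂ) * ((l j.succ : ℂ))⁻¹ = 1 := mul_inv_cancel₀ (hls j)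
    have e3 : ((a j : ℂ) - lam) * (((a j : ℂ) - lam))⁻¹ = 1 := mul_inv_cancel₀ (hd j)
    simp only [hB, hC, Matrix.of_apply, hdd, hqn, div_eq_mul_inv, mul_inv]
    linear_combination (-(a j : ℂ)^2 * (l j.succ : ℂ) * ((l 0 : ℂ))⁻¹ * (((a j : ℂ) - lam))⁻¹) * e1
      + (-(a j : ℂ) * (l j.succ : ℂ) * ((l 0 : ℂ))⁻¹) * e3
  have per : ∀ j : Fin m, ((l 0 : ℂ))⁻¹ * ((q j : ℂ) * (N j : ℂ)) - B 0 j * (d j)⁻¹ * C j 0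
      = -lam * (((a j : ℂ) * (l j.succ : ℂ)) / ((l 0 : ℂ) * ((a j : ℂ) - lam))) := by
    intro j
    linear_combination key j
  have h1 : ((l 0 : ℂ))⁻¹ * (∑ j : Fin m, (q j : ℂ) * (N j : ℂ))
      = ∑ j : Fin m, ((l 0 : ℂ))⁻¹ * ((q j : ℂ) * (N j : ℂ)) := Finset.mul_sum _ _ _
  have h2 : ∑ j : Fin m, (((l 0 : ℂ))⁻¹ * ((q j : ℂ) * (N j : ℂ)) - B 0 j * (d j)⁻¹ * C j 0)
      = ∑ j : Fin m, -lam * (((a j : ℂ) * (l j.succ : ℂ)) / ((l 0 : ℂ) * ((a j : ℂ) - lam))) :=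
    Finset.sum_congr rfl fun j _ => per j
  have h3 : ∑ j : Fin m, (((l 0 : ℂ))⁻¹ * ((q j : ℂ) * (N j : ℂ)) - B 0 j * (d j)⁻¹ * C j 0)
      = (∑ j : Fin m, ((l 0 : ℂ))⁻¹ * ((q j : ℂ) * (N j : ℂ)))
        - ∑ j : Fin m, B 0 j * (d j)⁻¹ * C j 0 := Finset.sum_sub_distrib _ _
  have h4 : ∑ j : Fin m, -lam * (((a j : ℂ) * (l j.succ : ℂ)) / ((l 0 : ℂ) * ((a j : ℂ) - lam)))
      = -lam * ∑ j : Fin m, ((a j : ℂ) * (l j.succ : ℂ)) / ((l 0 : ℂ) * ((a j : ℂ) - lam)) :=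
    (Finset.mul_sum _ _ _).symm
  have hscalar : ((l 0 : ℂ))⁻¹ * (∑ j : Fin m, (q j : ℂ) * (N j : ℂ)) - lam
      - ∑ j : Fin m, B 0 j * (d j)⁻¹ * C j 0
      = -lam * (1 + ∑ i : Fin m, ((a i : ℂ) * (l i.succ : ℂ)) / ((l 0 : ℂ) * ((a i : ℂ) - lam))) := by
    linear_combination h1 - h3 + h2 + h4
  linear_combination (∏ j : Fin m, d j) * hscalar
end

section
/- Assume that the numbers a_j := N_j q_j / l_j are pairwise distinct. Then a complex number λ is an eigenvalue of A (i.e. det(A − λ·I) = 0) if and only if either λ = 0, or λ ∉ {a_1, ..., a_m} and F(λ) = 0, where F(λ) := 1 + Σ_{i=1}^m a_i l_i / (l_0 (a_i − λ)). In particular, no a_j is an eigenvalue of A. -/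
open Matrix Finset Polynomial

lemma my_det_updateRow_add_sum_smul {n R : Type*} [DecidableEq n] [Fintype n] [CommRing R]
    (M : Matrix n n R) (i : n) (c : n → R) (s : Finset n) (h : i ∉ s) :
    (M.updateRow i (M i + ∑ j ∈ s, c j • M j)).det = M.det := by
  induction s using Finset.induction_on with
  | empty => simp
  | @insert a s hj ih =>
    have hia : i ≠ a := fun e => h (e ▸ Finset.mem_insert_self a s)
    have his : i ∉ s := fun e => h (Finset.mem_insert_of_mem e)
    set N := M.updateRow i (M i + ∑ j ∈ s, c j • M j) with hN
    have h1 : M.updateRow i (M i + ∑ j ∈ insert a s, c j • M j)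
        = N.updateRow i (N i + c a • N a) := by
      ext b k
      by_cases hbi : b = i
      · subst hbi
        simp only [updateRow_self, hN, updateRow_ne hia.symm,
          Finset.sum_insert hj]
        simp [Pi.add_apply, Finset.sum_apply]
        ring
      · simp [updateRow_ne hbi, hN]
    rw [h1, Matrix.det_updateRow_add_smul_self N hia, ih his]

/-- If the `a j = N j q j / l j` are pairwise distinct, then `λ ∈ ℂ` is an
eigenvalue of `A` iff `λ = 0` or (`λ ∉ {a 1, ..., a m}` and `F(λ) = 0`).
In particular no `a j` is an eigenvalue of `A`. -/
theorem eigenvalues_iff_roots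
    (m : ℕ) (hm : 1 ≤ m)
    (l : Fin (m + 1) → ℝ) (hl : ∀ i, 0 < l i)
    (q : Fin m → ℝ) (hq : ∀ j, 0 < q j)
    (N : Fin m → ℕ) (hN : ∀ j, 0 < N j)
    (a : Fin m → ℝ) (ha : ∀ j, a j = (N j : ℝ) * q j / l j.succ)
    (hdist : ∀ i j : Fin m, i ≠ j → a i ≠ a j)
    (F : ℂ → ℂ)
    (hF : ∀ lam : ℂ, F lam = 1 + ∑ i : Fin m,
      ((a i : ℂ) * (l i.succ : ℂ)) / ((l 0 : ℂ) * ((a i : ℂ) - lam)))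
    (A : Matrix (Fin (m + 1)) (Fin (m + 1)) ℝ)
    (hA00 : A 0 0 = (l 0)⁻¹ * ∑ j : Fin m, q j * (N j : ℝ))
    (hA0j : ∀ j : Fin m, A 0 j.succ = -(l 0)⁻¹ * (q j * (N j : ℝ)))
    (hAj0 : ∀ j : Fin m, A j.succ 0 = -(l j.succ)⁻¹ * (q j * (N j : ℝ)))
    (hAjj : ∀ j : Fin m, A j.succ j.succ = (l j.succ)⁻¹ * (q j * (N j : ℝ)))
    (hAjk : ∀ j k : Fin m, j ≠ k → A j.succ k.succ = 0) :
    (∀ lam : ℂ, Matrix.det ((A.map Complex.ofReal) - lam • 1) = 0 ↔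
      (lam = 0 ∨ ((∀ i : Fin m, lam ≠ (a i : ℂ)) ∧ F lam = 0))) ∧
    (∀ j : Fin m, Matrix.det ((A.map Complex.ofReal) - (a j : ℂ) • 1) ≠ 0) := by
  classical
  have hl0 : (l 0 : ℂ) ≠ 0 := Complex.ofReal_ne_zero.mpr (hl 0).ne'
  have hlj : ∀ j : Fin m, (l j.succ : ℂ) ≠ 0 :=
    fun j => Complex.ofReal_ne_zero.mpr (hl j.succ).ne'
  have hapos : ∀ j, 0 < a j := by
    intro j; rw [ha]
    have := hN j
    have := hq j
    have := hl j.succ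
    positivity
  set α : Fin m → ℂ := fun i => ((a i : ℝ) : ℂ) with hα
  set c : Fin m → ℂ := fun i => α i * ((l i.succ : ℝ) : ℂ) / ((l 0 : ℝ) : ℂ) with hc
  have hα0 : ∀ i, α i ≠ 0 := fun i => Complex.ofReal_ne_zero.mpr (hapos i).ne'
  have hαdist : ∀ i j : Fin m, i ≠ j → α i ≠ α j := fun i j hij e =>
    hdist i j hij (Complex.ofReal_injective e)
  have hc0 : ∀ i, c i ≠ 0 := fun i => div_ne_zero (mul_ne_zero (hα0 i) (hlj i)) hl0
  have hcval : ∀ j : Fin m, c j = ((l 0 : ℝ) : ℂ)⁻¹ * ((q j : ℂ) * (N j : ℂ)) := by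
    intro j
    show ((a j : ℝ) : ℂ) * ((l j.succ : ℝ) : ℂ) / ((l 0 : ℝ) : ℂ) = _
    rw [ha j]
    push_cast
    rw [div_mul_cancel₀ _ (hlj j), div_eq_inv_mul]
    ring
  have hαval : ∀ j : Fin m, α j = ((l j.succ : ℝ) : ℂ)⁻¹ * ((q j : ℂ) * (N j : ℂ)) := by
    intro j
    show ((a j : ℝ) : ℂ) = _
    rw [ha j]
    push_cast
    ring
  -- entries of A.map ofReal - lam • 1
  have hM00 : ∀ lam : ℂ, (A.map Complex.ofReal - lam • 1) 0 0 = (∑ j, c j) - lam := by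
    intro lam
    simp only [Matrix.sub_apply, Matrix.map_apply, Matrix.smul_apply, Matrix.one_apply_eq,
      smul_eq_mul, mul_one, hA00]
    push_cast
    congr 1
    rw [Finset.mul_sum]
    exact Finset.sum_congr rfl fun j _ => (hcval j).symm
  have hM0j : ∀ lam : ℂ, ∀ j : Fin m,
      (A.map Complex.ofReal - lam • 1) 0 j.succ = -c j := by
    intro lam j
    simp only [Matrix.sub_apply, Matrix.map_apply, Matrix.smul_apply,
      Matrix.one_apply_ne (Fin.succ_ne_zero j).symm, smul_eq_mul, mul_zero, sub_zero, hA0j j]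
    rw [hcval j]
    push_cast
    ring
  have hMj0 : ∀ lam : ℂ, ∀ j : Fin m,
      (A.map Complex.ofReal - lam • 1) j.succ 0 = -α j := by
    intro lam j
    simp only [Matrix.sub_apply, Matrix.map_apply, Matrix.smul_apply,
      Matrix.one_apply_ne (Fin.succ_ne_zero j), smul_eq_mul, mul_zero, sub_zero, hAj0 j]
    rw [hαval j]
    push_cast
    ring
  have hMjj : ∀ lam : ℂ, ∀ j : Fin m,
      (A.map Complex.ofReal - lam • 1) j.succ j.succ = α j - lam := by
    intro lam j
    simp only [Matrix.sub_apply, Matrix.map_apply, Matrix.smul_apply, Matrix.one_apply_eq,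
      smul_eq_mul, mul_one, hAjj j]
    rw [hαval j]
    push_cast
    ring
  have hMjk : ∀ lam : ℂ, ∀ j k : Fin m, j ≠ k →
      (A.map Complex.ofReal - lam • 1) j.succ k.succ = 0 := by
    intro lam j k hjk
    simp [Matrix.sub_apply, Matrix.map_apply, Matrix.smul_apply,
      Matrix.one_apply_ne (fun h => hjk (Fin.succ_injective _ h)), hAjk j k hjk]
  have hFd : ∀ lam : ℂ, (∀ i, α i - lam ≠ 0) →
      F lam = 1 + ∑ i, c i / (α i - lam) := by
    intro lam _
    rw [hF lam]
    congr 1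
    refine Finset.sum_congr rfl fun i _ => ?_
    show (α i * ((l i.succ : ℝ) : ℂ)) / (((l 0 : ℝ) : ℂ) * (α i - lam))
        = (α i * ((l i.succ : ℝ) : ℂ) / ((l 0 : ℝ) : ℂ)) / (α i - lam)
    rw [div_div]
  have hαa : ∀ i : Fin m, ((a i : ℝ) : ℂ) = α i := fun i => rfl
  clear_value α c
  -- key determinant formula away from the poles
  have key : ∀ lam : ℂ, (∀ i, α i - lam ≠ 0) →
      Matrix.det (A.map Complex.ofReal - lam • 1)
        = -lam * ((1 + ∑ i, c i / (α i - lam)) * ∏ i, (α i - lam)) := by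
    intro lam hne
    set M : Matrix (Fin (m+1)) (Fin (m+1)) ℂ := A.map Complex.ofReal - lam • 1 with hM
    have mm00 : M 0 0 = (∑ j, c j) - lam := hM00 lam
    have mm0j : ∀ j : Fin m, M 0 j.succ = -c j := hM0j lam
    have mmj0 : ∀ j : Fin m, M j.succ 0 = -α j := hMj0 lam
    have mmjj : ∀ j : Fin m, M j.succ j.succ = α j - lam := hMjj lam
    have mmjk : ∀ j k : Fin m, j ≠ k → M j.succ k.succ = 0 := hMjk lam
    set d : Fin m → ℂ := fun i => c i / (α i - lam) with hd
    set e : Fin (m+1) → ℂ := fun i => Fin.cases 0 d i with he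
    clear_value e
    have hsum : ∀ k, (∑ j ∈ Finset.univ.erase 0, e j • M j) k
        = ∑ j : Fin m, d j * M j.succ k := by
      intro k
      simp only [Finset.sum_apply, Pi.smul_apply, smul_eq_mul]
      rw [Finset.sum_erase_eq_sub (Finset.mem_univ (0 : Fin (m+1))), Fin.sum_univ_succ]
      simp [he]
    set M' := M.updateRow 0 (M 0 + ∑ j ∈ Finset.univ.erase 0, e j • M j) with hM'
    have hdet' : M'.det = M.det :=
      my_det_updateRow_add_sum_smul M 0 e _ (by simp)
    have hrow : ∀ k, M' 0 k = M 0 k + ∑ j : Fin m, d j * M j.succ k := by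
      intro k
      rw [hM', updateRow_self, Pi.add_apply, hsum]
    clear_value d
    have hterm : ∀ j : Fin m, d j * M j.succ 0 = -(c j) - lam * d j := by
      intro j
      rw [mmj0 j]
      simp only [hd]
      field_simp [hne j]
      ring
    have hrow0 : M' 0 0 = -lam * (1 + ∑ j, d j) := by
      have h4 : (∑ j, d j * M j.succ 0) = ∑ j, (-(c j) - lam * d j) :=
        Finset.sum_congr rfl fun j _ => hterm j
      have h5 : (∑ j : Fin m, (-(c j) - lam * d j))
          = -(∑ j, c j) - lam * ∑ j, d j := by
        rw [Finset.sum_sub_distrib, ← Finset.mul_sum, Finset.sum_neg_distrib]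
      rw [hrow 0, mm00, h4, h5]
      ring
    have hrowsucc : ∀ k : Fin m, M' 0 k.succ = 0 := by
      intro k
      rw [hrow k.succ, mm0j k]
      have hs : ∀ j : Fin m, d j * M j.succ k.succ = if j = k then c k else 0 := by
        intro j
        by_cases hjk : j = k
        · subst hjk
          rw [mmjj j, if_pos rfl]
          simp only [hd]
          rw [div_mul_cancel₀ _ (hne j)]
        · rw [mmjk j k hjk, if_neg hjk, mul_zero]
      rw [Finset.sum_congr rfl fun j _ => hs j, Finset.sum_ite_eq' Finset.univ k]
      simp
    have htri : M'.BlockTriangular OrderDual.toDual := by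
      intro i j hij
      rw [OrderDual.toDual_lt_toDual] at hij
      induction i using Fin.cases with
      | zero =>
        induction j using Fin.cases with
        | zero => exact absurd hij (lt_irrefl _)
        | succ k => exact hrowsucc k
      | succ j' =>
        induction j using Fin.cases with
        | zero => exact absurd hij (Fin.not_lt_zero _)
        | succ k =>
          have hj'k : j' ≠ k := by
            intro hh; subst hh; exact absurd hij (lt_irrefl _)
          rw [hM', updateRow_ne (Fin.succ_ne_zero j')]
          exact mmjk j' k hj'k
    have hsucc_diag : ∀ j : Fin m, M' j.succ j.succ = α j - lam := by
      intro j
      rw [hM', updateRow_ne (Fin.succ_ne_zero j)]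
      exact mmjj j
    have hds : (∑ j, d j) = ∑ i, c i / (α i - lam) :=
      Finset.sum_congr rfl fun i _ => by rw [hd]
    rw [← hdet', Matrix.det_of_lowerTriangular M' htri, Fin.prod_univ_succ, hrow0,
      Finset.prod_congr rfl fun j _ => hsucc_diag j, hds]
    ring
  -- the auxiliary polynomial-valued function
  set gf : ℂ → ℂ := fun lam => (∏ i, (α i - lam))
      + ∑ i, c i * ∏ k ∈ Finset.univ.erase i, (α k - lam) with hgf
  have expand : ∀ lam : ℂ, (∀ i, α i - lam ≠ 0) →
      (1 + ∑ i, c i / (α i - lam)) * ∏ i, (α i - lam) = gf lam := by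
    intro lam hne
    show _ = (∏ i, (α i - lam)) + ∑ i, c i * ∏ k ∈ Finset.univ.erase i, (α k - lam)
    rw [add_mul, one_mul, Finset.sum_mul]
    congr 1
    refine Finset.sum_congr rfl fun i _ => ?_
    rw [← Finset.mul_prod_erase Finset.univ _ (Finset.mem_univ i), ← mul_assoc,
      div_mul_cancel₀ _ (hne i)]
  set P : Polynomial ℂ :=
    ((A.map Complex.ofReal).map Polynomial.C - (Polynomial.X : Polynomial ℂ) • 1).det with hP
  set Q : Polynomial ℂ := -Polynomial.X * ((∏ i, (Polynomial.C (α i) - Polynomial.X))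
      + ∑ i, Polynomial.C (c i) * ∏ k ∈ Finset.univ.erase i,
          (Polynomial.C (α k) - Polynomial.X)) with hQ
  have hevalP : ∀ lam : ℂ,
      Polynomial.eval lam P = Matrix.det (A.map Complex.ofReal - lam • 1) := by
    intro lam
    have h1 := (Polynomial.evalRingHom lam).map_det
      ((A.map Complex.ofReal).map Polynomial.C - (Polynomial.X : Polynomial ℂ) • 1)
    have h2 : ((A.map Complex.ofReal).map Polynomial.C
        - (Polynomial.X : Polynomial ℂ) • 1).map (Polynomial.evalRingHom lam)
        = A.map Complex.ofReal - lam • 1 := by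
      ext i j
      by_cases hij : i = j
      · subst hij
        simp [Matrix.map_apply, Matrix.sub_apply, Matrix.smul_apply, Matrix.one_apply_eq]
      · simp [Matrix.map_apply, Matrix.sub_apply, Matrix.smul_apply, Matrix.one_apply_ne hij]
    have h3 : Polynomial.eval lam P
        = (((A.map Complex.ofReal).map Polynomial.C
            - (Polynomial.X : Polynomial ℂ) • 1).map (Polynomial.evalRingHom lam)).det := by
      rw [hP, ← Polynomial.coe_evalRingHom]
      exact h1
    rw [h3, h2]
  have hevalQ : ∀ lam : ℂ, Polynomial.eval lam Q = -lam * gf lam := by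
    intro lam
    show Polynomial.eval lam Q = -lam * ((∏ i, (α i - lam))
        + ∑ i, c i * ∏ k ∈ Finset.univ.erase i, (α k - lam))
    rw [hQ]
    simp [Polynomial.eval_prod, Polynomial.eval_finset_sum]
  have hPQ : P = Q := by
    apply Polynomial.eq_of_infinite_eval_eq
    refine Set.Infinite.mono ?_ ((Set.finite_range α).infinite_compl)
    intro x hx
    have hne : ∀ i, α i - x ≠ 0 := fun i h0 => hx ⟨i, sub_eq_zero.mp h0⟩
    show Polynomial.eval x P = Polynomial.eval x Q
    rw [hevalP x, hevalQ x, key x hne, expand x hne]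
  have hdetg : ∀ lam : ℂ, Matrix.det (A.map Complex.ofReal - lam • 1) = -lam * gf lam := by
    intro lam
    rw [← hevalP lam, hPQ, hevalQ lam]
  have hgα : ∀ j : Fin m, gf (α j) ≠ 0 := by
    intro j
    have h1 : (∏ i, (α i - α j)) = 0 :=
      Finset.prod_eq_zero (Finset.mem_univ j) (sub_self (α j))
    have h2 : (∑ i, c i * ∏ k ∈ Finset.univ.erase i, (α k - α j))
        = c j * ∏ k ∈ Finset.univ.erase j, (α k - α j) := by
      refine Finset.sum_eq_single j (fun i _ hij => ?_)
        (fun h => absurd (Finset.mem_univ j) h)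
      have hjmem : j ∈ Finset.univ.erase i := Finset.mem_erase.mpr ⟨hij.symm, Finset.mem_univ j⟩
      rw [Finset.prod_eq_zero hjmem (sub_self (α j)), mul_zero]
    have h3 : c j * ∏ k ∈ Finset.univ.erase j, (α k - α j) ≠ 0 :=
      mul_ne_zero (hc0 j) (Finset.prod_ne_zero_iff.mpr fun k hk =>
        sub_ne_zero_of_ne (hαdist k j (Finset.mem_erase.mp hk).1))
    show (∏ i, (α i - α j)) + (∑ i, c i * ∏ k ∈ Finset.univ.erase i, (α k - α j)) ≠ 0
    rw [h1, h2, zero_add]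
    exact h3
  have main : ∀ lam : ℂ, Matrix.det ((A.map Complex.ofReal) - lam • 1) = 0 ↔
      (lam = 0 ∨ ((∀ i : Fin m, lam ≠ (a i : ℂ)) ∧ F lam = 0)) := by
    intro lam
    rw [hdetg lam]
    constructor
    · intro h
      rcases mul_eq_zero.mp h with h0 | hg
      · exact Or.inl (neg_eq_zero.mp h0)
      · right
        have hne0 : ∀ i, lam ≠ α i := by
          intro i e
          rw [e] at hg
          exact hgα i hg
        have hne : ∀ i : Fin m, lam ≠ ((a i : ℝ) : ℂ) := by
          intro i
          rw [hαa i]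
          exact hne0 i
        have hne' : ∀ i, α i - lam ≠ 0 := fun i => sub_ne_zero_of_ne fun e => hne0 i e.symm
        refine ⟨hne, ?_⟩
        have hexp := expand lam hne'
        have hprod : (∏ i, (α i - lam)) ≠ 0 :=
          Finset.prod_ne_zero_iff.mpr fun i _ => hne' i
        have hz : (1 + ∑ i, c i / (α i - lam)) * ∏ i, (α i - lam) = 0 := by
          rw [hexp, hg]
        rw [hFd lam hne']
        exact (mul_eq_zero.mp hz).resolve_right hprod
    · rintro (rfl | ⟨hne, hF0⟩)
      · simp
      · have hne' : ∀ i, α i - lam ≠ 0 := by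
          intro i
          refine sub_ne_zero_of_ne fun e => hne i ?_
          rw [hαa i]
          exact e.symm
        rw [← expand lam hne', ← hFd lam hne', hF0, zero_mul, mul_zero]
  refine ⟨main, fun j hdet0 => ?_⟩
  rcases (main ((a j : ℝ) : ℂ)).mp hdet0 with h0 | ⟨hne, _⟩
  · rw [hαa j] at h0
    exact hα0 j h0
  · exact hne j rfl
end

section
/- For every λ ∈ ℂ with λ ∉ {a_1, ..., a_m}, one has F(λ) = (Π_{j=1}^m (a_j − λ))^{-1} · Σ_{k=0}^m λ^{m−k} (−1)^{m−k} Σ_{S ⊆ {1,...,m}, |S| = k} (Π_{s ∈ S} a_s)(1 + l_0^{-1} Σ_{s ∈ S} l_s), where for k = 0 the inner sum is interpreted as 1. -/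
open Finset

/-- Expansion of a product of shifted terms over subsets. -/
lemma prod_add_pow_aux {ι : Type*} [DecidableEq ι] (s : Finset ι) (f : ι → ℂ) (c : ℂ) :
    ∏ j ∈ s, (f j + c) = ∑ T ∈ s.powerset, (∏ x ∈ T, f x) * c ^ (s.card - T.card) := by
  rw [Finset.prod_add]
  refine Finset.sum_congr rfl fun T hT => ?_
  rw [Finset.prod_const, Finset.card_sdiff_of_subset (Finset.mem_powerset.1 hT)]

/-- For `λ ∉ {a 1, ..., a m}`,
`F(λ) = (∏ j (a j - λ))⁻¹ ∑_{k=0}^m λ^(m-k) (-1)^(m-k)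
          ∑_{S ⊆ {1,...,m}, |S| = k} (∏_{s ∈ S} a s)(1 + l 0⁻¹ ∑_{s ∈ S} l s)`. -/
theorem F_expansion
    (m : ℕ) (hm : 1 ≤ m)
    (l0 : ℝ) (hl0 : 0 < l0)
    (l a : Fin m → ℝ) (hl : ∀ i, 0 < l i) (ha : ∀ i, 0 < a i)
    (hdist : ∀ i j : Fin m, i ≠ j → a i ≠ a j)
    (F : ℂ → ℂ)
    (hF : ∀ lam : ℂ, F lam = 1 + ∑ i : Fin m,
      ((a i : ℂ) * (l i : ℂ)) / ((l0 : ℂ) * ((a i : ℂ) - lam)))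
    (lam : ℂ) (hlam : ∀ i : Fin m, lam ≠ (a i : ℂ)) :
    F lam = (∏ j : Fin m, ((a j : ℂ) - lam))⁻¹ *
      ∑ k ∈ Finset.range (m + 1), lam ^ (m - k) * (-1 : ℂ) ^ (m - k) *
        ∑ S ∈ Finset.powersetCard k (Finset.univ : Finset (Fin m)),
          ((∏ s ∈ S, (a s : ℂ)) * (1 + (l0 : ℂ)⁻¹ * ∑ s ∈ S, (l s : ℂ))) := by
  set A : Fin m → ℂ := fun i => (a i : ℂ) with hA
  have hAi : ∀ i, A i - lam ≠ 0 := fun i => sub_ne_zero.2 (Ne.symm (hlam i))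
  have hl0' : (l0 : ℂ) ≠ 0 := by
    exact_mod_cast ne_of_gt hl0
  set P : ℂ := ∏ j : Fin m, (A j - lam) with hPdef
  have hP : P ≠ 0 := Finset.prod_ne_zero_iff.2 fun i _ => hAi i
  have hcard : (Finset.univ : Finset (Fin m)).card = m := Finset.card_univ.trans (Fintype.card_fin m)
  -- rewrite RHS sum as a sum over the powerset
  have hsum : (∑ k ∈ Finset.range (m + 1), lam ^ (m - k) * (-1 : ℂ) ^ (m - k) *
        ∑ S ∈ Finset.powersetCard k (Finset.univ : Finset (Fin m)),
          ((∏ s ∈ S, A s) * (1 + (l0 : ℂ)⁻¹ * ∑ s ∈ S, (l s : ℂ)))) =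
      ∑ S ∈ (Finset.univ : Finset (Fin m)).powerset,
        (-lam) ^ (m - S.card) * ((∏ s ∈ S, A s) * (1 + (l0 : ℂ)⁻¹ * ∑ s ∈ S, (l s : ℂ))) := by
    rw [Finset.sum_powerset, hcard]
    refine Finset.sum_congr rfl fun k hk => ?_
    rw [Finset.mul_sum]
    refine Finset.sum_congr rfl fun S hS => ?_
    rw [(Finset.mem_powersetCard.1 hS).2, neg_pow lam]
    ring
  -- per-index identity
  have hterm : ∀ i : Fin m,
      (∑ S ∈ (Finset.univ : Finset (Fin m)).powerset,
        if i ∈ S then (-lam) ^ (m - S.card) * ∏ s ∈ S, A s else 0) =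
      A i * ∏ j ∈ (Finset.univ : Finset (Fin m)).erase i, (A j - lam) := by
    intro i
    have hins : (Finset.univ : Finset (Fin m)) =
        insert i ((Finset.univ : Finset (Fin m)).erase i) :=
      (Finset.insert_erase (Finset.mem_univ i)).symm
    have hcard' : ((Finset.univ : Finset (Fin m)).erase i).card = m - 1 := by
      rw [Finset.card_erase_of_mem (Finset.mem_univ i), hcard]
    rw [hins, Finset.sum_powerset_insert (Finset.notMem_erase i _)]
    have h1 : (∑ T ∈ ((Finset.univ : Finset (Fin m)).erase i).powerset,
        if i ∈ T then (-lam) ^ (m - T.card) * ∏ s ∈ T, A s else 0) = 0 := by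
      refine Finset.sum_eq_zero fun T hT => ?_
      have : i ∉ T := fun h => Finset.notMem_erase i _ (Finset.mem_powerset.1 hT h)
      simp [this]
    rw [h1, zero_add]
    have h2 : (∑ T ∈ ((Finset.univ : Finset (Fin m)).erase i).powerset,
        if i ∈ insert i T then (-lam) ^ (m - (insert i T).card) * ∏ s ∈ insert i T, A s else 0) =
        ∑ T ∈ ((Finset.univ : Finset (Fin m)).erase i).powerset,
          A i * ((∏ s ∈ T, A s) * (-lam) ^ ((m - 1) - T.card)) := by
      refine Finset.sum_congr rfl fun T hT => ?_
      have hiT : i ∉ T := fun h => Finset.notMem_erase i _ (Finset.mem_powerset.1 hT h)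
      rw [if_pos (Finset.mem_insert_self i T), Finset.card_insert_of_notMem hiT,
        Finset.prod_insert hiT]
      have : m - (T.card + 1) = (m - 1) - T.card := by omega
      rw [this]; ring
    rw [h2, ← Finset.mul_sum, ← hcard']
    have h3 := prod_add_pow_aux ((Finset.univ : Finset (Fin m)).erase i) A (-lam)
    rw [← h3]
    simp [sub_eq_add_neg]
  -- main computation
  rw [hF lam, eq_inv_mul_iff_mul_eq₀ hP]
  rw [show (∑ k ∈ Finset.range (m + 1), lam ^ (m - k) * (-1 : ℂ) ^ (m - k) *
        ∑ S ∈ Finset.powersetCard k (Finset.univ : Finset (Fin m)),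
          ((∏ s ∈ S, (a s : ℂ)) * (1 + (l0 : ℂ)⁻¹ * ∑ s ∈ S, (l s : ℂ)))) =
      ∑ S ∈ (Finset.univ : Finset (Fin m)).powerset,
        (-lam) ^ (m - S.card) * ((∏ s ∈ S, A s) * (1 + (l0 : ℂ)⁻¹ * ∑ s ∈ S, (l s : ℂ)))
    from hsum]
  -- split the powerset sum into two parts
  have hsplit : (∑ S ∈ (Finset.univ : Finset (Fin m)).powerset,
      (-lam) ^ (m - S.card) * ((∏ s ∈ S, A s) * (1 + (l0 : ℂ)⁻¹ * ∑ s ∈ S, (l s : ℂ)))) =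
      (∑ S ∈ (Finset.univ : Finset (Fin m)).powerset, (∏ s ∈ S, A s) * (-lam) ^ (m - S.card)) +
      (l0 : ℂ)⁻¹ * ∑ S ∈ (Finset.univ : Finset (Fin m)).powerset,
        ∑ i ∈ S, (l i : ℂ) * ((-lam) ^ (m - S.card) * ∏ s ∈ S, A s) := by
    rw [Finset.mul_sum, ← Finset.sum_add_distrib]
    refine Finset.sum_congr rfl fun S hS => ?_
    rw [← Finset.sum_mul]
    ring
  rw [hsplit]
  have hfirst : (∑ S ∈ (Finset.univ : Finset (Fin m)).powerset,
      (∏ s ∈ S, A s) * (-lam) ^ (m - S.card)) = P := by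
    have h := prod_add_pow_aux (Finset.univ : Finset (Fin m)) A (-lam)
    rw [hcard] at h
    rw [← h, hPdef]
    simp [sub_eq_add_neg]
  rw [hfirst]
  -- swap the double sum in the second part
  have hswap : (∑ S ∈ (Finset.univ : Finset (Fin m)).powerset,
      ∑ i ∈ S, (l i : ℂ) * ((-lam) ^ (m - S.card) * ∏ s ∈ S, A s)) =
      ∑ i : Fin m, (l i : ℂ) * (A i * ∏ j ∈ (Finset.univ : Finset (Fin m)).erase i, (A j - lam)) := by
    have : (∑ S ∈ (Finset.univ : Finset (Fin m)).powerset,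
        ∑ i ∈ S, (l i : ℂ) * ((-lam) ^ (m - S.card) * ∏ s ∈ S, A s)) =
        ∑ S ∈ (Finset.univ : Finset (Fin m)).powerset, ∑ i : Fin m,
          (l i : ℂ) * (if i ∈ S then (-lam) ^ (m - S.card) * ∏ s ∈ S, A s else 0) := by
      refine Finset.sum_congr rfl fun S hS => ?_
      symm
      simp only [mul_ite, mul_zero]
      rw [Finset.sum_ite_mem, Finset.univ_inter]
    rw [this, Finset.sum_comm]
    refine Finset.sum_congr rfl fun i _ => ?_
    rw [← Finset.mul_sum, hterm i]
  rw [hswap]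
  -- now prove the algebraic identity
  rw [mul_add, mul_one, Finset.mul_sum]
  congr 1
  rw [Finset.mul_sum]
  refine Finset.sum_congr rfl fun i _ => ?_
  have hPi : P = (A i - lam) * ∏ j ∈ (Finset.univ : Finset (Fin m)).erase i, (A j - lam) :=
    (Finset.mul_prod_erase Finset.univ _ (Finset.mem_univ i)).symm
  rw [hPi]
  rw [div_eq_mul_inv, mul_inv, show ((A i : ℂ) - lam)⁻¹ = (A i - lam)⁻¹ from rfl]
  have h1 : (A i - lam) * (A i - lam)⁻¹ = 1 := mul_inv_cancel₀ (hAi i)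
  field_simp [hAi i]
  ring
end

section
/- For each j = 1, ..., m the quantity l_j := l_0 · ((β_j − α_j)/α_j) · Π_{i ∈ {1,...,m}, i ≠ j} (β_i − α_j)/(α_i − α_j) is a positive real number. -/
/-- Under the interlacing conditions, each
`l j = l0 ((β j - α j)/α j) ∏_{i ≠ j} (β i - α j)/(α i - α j)` is positive. -/
theorem lengths_positive
    (m : ℕ) (hm : 0 < m)
    (l0 : ℝ) (hl0 : 0 < l0)
    (α β : Fin m → ℝ)
    (hα1 : 0 < α ⟨0, hm⟩)
    (hαβ : ∀ j : Fin m, α j < β j)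
    (hβα : ∀ j : Fin m, ∀ h : j.1 + 1 < m, β j < α ⟨j.1 + 1, h⟩) :
    ∀ j : Fin m,
      0 < l0 * ((β j - α j) / α j) *
        ∏ i ∈ Finset.univ.erase j, (β i - α j) / (α i - α j) := by
  -- monotonicity of α
  have haux : ∀ n : ℕ, ∀ h : n < m, ∀ k : Fin m, k.1 < n → α k < α ⟨n, h⟩ := by
    intro n
    induction n with
    | zero => intro h k hk; omega
    | succ n ih =>
      intro h k hk
      have hn : n < m := by omega
      have hstep : α ⟨n, hn⟩ < α ⟨n + 1, h⟩ :=
        (hαβ ⟨n, hn⟩).trans (hβα ⟨n, hn⟩ h)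
      rcases Nat.lt_or_ge k.1 n with h1 | h1
      · exact (ih hn k h1).trans hstep
      · have : k = ⟨n, hn⟩ := Fin.ext (by simp; omega)
        rw [this]; exact hstep
  have hmono : ∀ i j : Fin m, i.1 < j.1 → α i < α j := by
    intro i j hij
    have : α i < α ⟨j.1, j.2⟩ := haux j.1 j.2 i hij
    simpa using this
  have hβmono : ∀ i j : Fin m, i.1 < j.1 → β i < α j := by
    intro i j hij
    have hi1 : i.1 + 1 < m := by omega
    have h1 : β i < α ⟨i.1 + 1, hi1⟩ := hβα i hi1
    rcases Nat.lt_or_ge (i.1 + 1) j.1 with h2 | h2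
    · exact h1.trans (hmono ⟨i.1 + 1, hi1⟩ j h2)
    · have : (⟨i.1 + 1, hi1⟩ : Fin m) = j := Fin.ext (by simp; omega)
      rwa [this] at h1
  intro j
  have hαjpos : 0 < α j := by
    rcases Nat.eq_zero_or_pos j.1 with h0 | h0
    · have : (⟨0, hm⟩ : Fin m) = j := Fin.ext (by simp; omega)
      rwa [this] at hα1
    · exact hα1.trans (hmono ⟨0, hm⟩ j h0)
  have h1 : 0 < (β j - α j) / α j := div_pos (by linarith [hαβ j]) hαjpos
  have h2 : 0 < ∏ i ∈ Finset.univ.erase j, (β i - α j) / (α i - α j) := by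
    apply Finset.prod_pos
    intro i hi
    have hij : i ≠ j := Finset.ne_of_mem_erase hi
    rcases Nat.lt_or_ge i.1 j.1 with h | h
    · have hb : β i - α j < 0 := by linarith [hβmono i j h]
      have ha : α i - α j < 0 := by linarith [hmono i j h]
      exact div_pos_of_neg_of_neg hb ha
    · have hji : j.1 < i.1 := by
        rcases Nat.lt_or_ge j.1 i.1 with h' | h'
        · exact h'
        · exact absurd (Fin.ext (by omega)) hij
      have ha : 0 < α i - α j := by linarith [hmono j i hji]
      have hb : 0 < β i - α j := by linarith [hαβ i]
      exact div_pos hb ha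
  positivity
end

section
/- Define l_j := l_0 · ((β_j − α_j)/α_j) · Π_{i ∈ {1,...,m}, i ≠ j} (β_i − α_j)/(α_i − α_j) for j = 1, ..., m. Then for every i = 1, ..., m one has 1 + Σ_{j=1}^m α_j l_j / (l_0 (α_j − β_i)) = 0. -/
open Polynomial Finset

private lemma prod_neg_aux {ι : Type*} (s : Finset ι) (f : ι → ℝ) :
    ∏ i ∈ s, (-(f i)) = (-1 : ℝ) ^ s.card * ∏ i ∈ s, f i := by
  calc ∏ i ∈ s, (-(f i)) = ∏ i ∈ s, ((-1 : ℝ) * f i) := by simp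
    _ = (∏ _i ∈ s, (-1 : ℝ)) * ∏ i ∈ s, f i := Finset.prod_mul_distrib
    _ = (-1 : ℝ) ^ s.card * ∏ i ∈ s, f i := by rw [Finset.prod_const]

/-- With `l j = l0 ((β j - α j)/α j) ∏_{i ≠ j} (β i - α j)/(α i - α j)`,
for every `i` one has `1 + ∑ j, α j l j / (l0 (α j - β i)) = 0`. -/
theorem prescribed_lengths_solve_system
    (m : ℕ) (hm : 0 < m)
    (l0 : ℝ) (hl0 : 0 < l0)
    (α β : Fin m → ℝ)
    (hα1 : 0 < α ⟨0, hm⟩)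
    (hαβ : ∀ j : Fin m, α j < β j)
    (hβα : ∀ j : Fin m, ∀ h : j.1 + 1 < m, β j < α ⟨j.1 + 1, h⟩)
    (l : Fin m → ℝ)
    (hldef : ∀ j : Fin m, l j = l0 * ((β j - α j) / α j) *
      ∏ i ∈ Finset.univ.erase j, (β i - α j) / (α i - α j)) :
    ∀ i : Fin m, 1 + ∑ j : Fin m, α j * l j / (l0 * (α j - β i)) = 0 := by
  classical
  obtain ⟨n, rfl⟩ : ∃ n, m = n + 1 := ⟨m - 1, (Nat.succ_pred_eq_of_pos hm).symm⟩
  -- ordering facts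
  have hlt : ∀ a b : Fin (n + 1), (a : ℕ) < (b : ℕ) → β a < α b := by
    have key : ∀ nn (hn : nn < (n + 1)) (a : Fin (n + 1)), (a : ℕ) < nn → β a < α ⟨nn, hn⟩ := by
      intro nn
      induction nn with
      | zero => intro hn a ha; omega
      | succ k ih =>
        intro hn a ha
        rcases Nat.lt_succ_iff_lt_or_eq.mp ha with h | h
        · have hk : k < (n + 1) := Nat.lt_of_succ_lt hn
          calc β a < α ⟨k, hk⟩ := ih hk a h
            _ < β ⟨k, hk⟩ := hαβ _
            _ < α ⟨k + 1, hn⟩ := hβα ⟨k, hk⟩ hn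
        · have h2 : (a : ℕ) + 1 < (n + 1) := by omega
          have := hβα a h2
          have hfin : (⟨k + 1, hn⟩ : Fin (n + 1)) = ⟨(a : ℕ) + 1, h2⟩ := by simp [h]
          rw [hfin]; exact this
    intro a b hab
    have := key (b : ℕ) b.isLt a hab
    simpa using this
  have hmono : ∀ a b : Fin (n + 1), (a : ℕ) < (b : ℕ) → α a < α b :=
    fun a b hab => lt_trans (hαβ a) (hlt a b hab)
  have hαinj : Function.Injective α := by
    intro a b hab
    by_contra hne
    have : (a : ℕ) < b ∨ (b : ℕ) < a := by
      rcases lt_trichotomy (a : ℕ) (b : ℕ) with h | h | h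
      · exact Or.inl h
      · exact absurd (Fin.ext h) hne
      · exact Or.inr h
    rcases this with h | h
    · exact absurd hab (ne_of_lt (hmono a b h))
    · exact absurd hab.symm (ne_of_lt (hmono b a h))
  have hαpos : ∀ j : Fin (n + 1), 0 < α j := by
    intro j
    rcases Nat.eq_zero_or_pos (j : ℕ) with h | h
    · have : j = ⟨0, hm⟩ := Fin.ext h
      rw [this]; exact hα1
    · exact lt_trans hα1 (hmono ⟨0, hm⟩ j h)
  intro k
  have hβkα : ∀ j : Fin (n + 1), β k - α j ≠ 0 := by
    intro j
    rcases lt_trichotomy (j : ℕ) (k : ℕ) with h | h | h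
    · have : α j < β k := lt_trans (hmono j k h) (hαβ k)
      exact sub_ne_zero_of_ne (ne_of_gt this)
    · have : j = k := Fin.ext h
      subst this
      exact sub_ne_zero_of_ne (ne_of_gt (hαβ j))
    · exact sub_ne_zero_of_ne (ne_of_lt (hlt k j h))
  have hααne : ∀ j : Fin (n + 1), ∀ i ∈ Finset.univ.erase j, α i - α j ≠ 0 := by
    intro j i hi
    exact sub_ne_zero_of_ne fun h => (Finset.mem_erase.mp hi).1 (hαinj h)
  -- abbreviations
  set E : Fin (n + 1) → Finset (Fin (n + 1)) := fun j => Finset.univ.erase j with hE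
  have hcardE : ∀ j : Fin (n + 1), (E j).card = n := by
    intro j
    simp [hE, Finset.card_erase_of_mem, Finset.card_univ]
  set N : Fin (n + 1) → ℝ := fun j => ∏ i, (β i - α j) with hN
  set Dp : Fin (n + 1) → ℝ := fun j => ∏ i ∈ E j, (α i - α j) with hDp
  set Dm : Fin (n + 1) → ℝ := fun j => ∏ i ∈ E j, (α j - α i) with hDm
  set d : Fin (n + 1) → ℝ := fun j => N j / Dp j with hd
  set e : Fin (n + 1) → ℝ := fun j => (∏ i, (α j - β i)) / Dm j with he
  have hDpne : ∀ j, Dp j ≠ 0 := fun j =>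
    Finset.prod_ne_zero_iff.mpr (fun i hi => hααne j i hi)
  have hDmne : ∀ j, Dm j ≠ 0 := fun j =>
    Finset.prod_ne_zero_iff.mpr (fun i hi => fun h => hααne j i hi (by linarith [sub_eq_zero.mp h]))
  -- Step A : rewrite summands
  have hsummand : ∀ j : Fin (n + 1), α j * l j / (l0 * (α j - β k)) = d j / (α j - β k) := by
    intro j
    have hNj : N j = (β j - α j) * ∏ i ∈ E j, (β i - α j) :=
      (Finset.mul_prod_erase _ _ (Finset.mem_univ j)).symm
    have h1 : α j ≠ 0 := (hαpos j).ne'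
    have h2 : l0 ≠ 0 := hl0.ne'
    have h3 : (∏ i ∈ Finset.univ.erase j, (α i - α j)) ≠ 0 := by
      have := hDpne j; simpa [hDp, hE] using this
    have h4 : α j - β k ≠ 0 := fun h => hβkα j (by linarith [sub_eq_zero.mp h])
    rw [hldef j, Finset.prod_div_distrib, hd]
    simp only [hNj, hDp, hE]
    field_simp
  rw [Finset.sum_congr rfl fun j _ => hsummand j]
  -- Step B : polynomial identity
  set A : ℝ[X] := ∏ i, (X - C (α i)) with hA
  set Aj : Fin (n + 1) → ℝ[X] := fun j => ∏ i ∈ E j, (X - C (α i)) with hAj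
  set B : ℝ[X] := ∏ i, (X - C (β i)) with hB
  set S : ℝ[X] := ∑ j, C (e j) * Aj j with hS
  set p : ℝ[X] := B - A - S with hp
  have hAmonic : A.Monic := monic_prod_of_monic _ _ fun i _ => monic_X_sub_C _
  have hBmonic : B.Monic := monic_prod_of_monic _ _ fun i _ => monic_X_sub_C _
  have hAdeg : A.natDegree = (n + 1) := by
    rw [hA, natDegree_prod_of_monic _ _ fun i _ => monic_X_sub_C _]
    simp
  have hBdeg : B.natDegree = (n + 1) := by
    rw [hB, natDegree_prod_of_monic _ _ fun i _ => monic_X_sub_C _]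
    simp
  have hAjdeg : ∀ j, (Aj j).natDegree = n := by
    intro j
    rw [hAj]
    simp only []
    rw [natDegree_prod_of_monic _ _ fun i _ => monic_X_sub_C _]
    simp [hcardE j]
  -- evaluations
  have hAeval : ∀ x, A.eval x = ∏ i, (x - α i) := by intro x; simp [hA, eval_prod]
  have hAjeval : ∀ j x, (Aj j).eval x = ∏ i ∈ E j, (x - α i) := by
    intro j x; simp [hAj, eval_prod]
  have hBeval : ∀ x, B.eval x = ∏ i, (x - β i) := by intro x; simp [hB, eval_prod]
  have hpz : p = 0 := by
    by_cases hp0 : p = 0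
    · exact hp0
    refine Polynomial.eq_zero_of_natDegree_lt_card_of_eval_eq_zero p hαinj ?_ ?_
    · -- evals at α j
      intro j
      have hAz : A.eval (α j) = 0 := by
        rw [hAeval]
        exact Finset.prod_eq_zero (Finset.mem_univ j) (by ring)
      have hSz : S.eval (α j) = e j * Dm j := by
        rw [hS, eval_finset_sum]
        rw [Finset.sum_eq_single j]
        · rw [eval_mul, eval_C, hAjeval]
        · intro b _ hbj
          have : (Aj b).eval (α j) = 0 := by
            rw [hAjeval]
            exact Finset.prod_eq_zero (Finset.mem_erase.mpr ⟨Ne.symm hbj, Finset.mem_univ j⟩) (by ring)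
          rw [eval_mul, this, mul_zero]
        · intro h; exact absurd (Finset.mem_univ j) h
      have heDm : e j * Dm j = ∏ i, (α j - β i) := div_mul_cancel₀ _ (hDmne j)
      rw [hp]
      simp only [eval_sub]
      rw [hAz, hSz, heDm, hBeval]
      ring
    · -- degree bound
      have h1 : (B - A).degree < ((n + 1) : ℕ) := by
        have hAne : A ≠ 0 := hAmonic.ne_zero
        have : (B - A).degree < B.degree := by
          apply degree_sub_lt
          · rw [Polynomial.degree_eq_natDegree hBmonic.ne_zero, Polynomial.degree_eq_natDegree hAmonic.ne_zero, hAdeg, hBdeg]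
          · exact hBmonic.ne_zero
          · rw [hBmonic.leadingCoeff, hAmonic.leadingCoeff]
        rwa [Polynomial.degree_eq_natDegree hBmonic.ne_zero, hBdeg] at this
      have h2 : S.degree < ((n + 1) : ℕ) := by
        apply lt_of_le_of_lt (degree_sum_le _ _)
        apply Finset.sup_lt_iff (by exact_mod_cast WithBot.bot_lt_coe ((n + 1) : ℕ)) |>.mpr
        intro j _
        calc (C (e j) * Aj j).degree ≤ (Aj j).degree := by
              apply le_trans (degree_mul_le _ _)
              have := degree_C_le (a := e j)
              calc (C (e j)).degree + (Aj j).degree ≤ 0 + (Aj j).degree :=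
                    add_le_add degree_C_le le_rfl
                _ = (Aj j).degree := zero_add _
          _ ≤ ((Aj j).natDegree : WithBot ℕ) := degree_le_natDegree
          _ < ((n + 1) : ℕ) := by
              rw [hAjdeg j]
              exact_mod_cast Nat.lt_succ_self n
      have hdeg : p.degree < ((n + 1) : ℕ) := by
        rw [hp]
        exact lt_of_le_of_lt (degree_sub_le _ _) (max_lt h1 h2)
      have : p.natDegree < (n + 1) := (natDegree_lt_iff_degree_lt (n := n + 1) hp0).mpr hdeg
      simpa using this
  -- Step C : evaluate at β k
  have hkey : (∏ i, (β k - α i)) + ∑ j, e j * ∏ i ∈ E j, (β k - α i) = 0 := by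
    have := congrArg (Polynomial.eval (β k)) hpz
    rw [hp] at this
    simp only [eval_sub, eval_zero] at this
    have hBz : B.eval (β k) = 0 := by
      rw [hBeval]
      exact Finset.prod_eq_zero (Finset.mem_univ k) (by ring)
    rw [hBz, hS, eval_finset_sum] at this
    simp only [eval_mul, eval_C] at this
    rw [hAeval] at this
    have h2 : ∀ j : Fin (n + 1), (Aj j).eval (β k) = ∏ i ∈ E j, (β k - α i) := fun j => hAjeval j _
    rw [Finset.sum_congr rfl fun j _ => by rw [h2 j]] at this
    linarith
  -- Step D : per-term identity
  set P : ℝ := ∏ i, (β k - α i) with hP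
  have hPne : P ≠ 0 := Finset.prod_ne_zero_iff.mpr fun i _ => hβkα i
  have hterm : ∀ j : Fin (n + 1), e j * ∏ i ∈ E j, (β k - α i) = P * (d j / (α j - β k)) := by
    intro j
    have h1 : (∏ i, (α j - β i)) = (-1 : ℝ) ^ (n + 1) * N j := by
      have h := prod_neg_aux (Finset.univ : Finset (Fin (n + 1))) (fun i => β i - α j)
      simp only [neg_sub] at h
      rw [h, hN]
      simp
    have h2 : Dm j = (-1 : ℝ) ^ n * Dp j := by
      have h := prod_neg_aux (E j) (fun i => α i - α j)
      simp only [neg_sub] at h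
      simp only [hDm, hDp]
      rw [h, hcardE j]
    have h3 : P = (β k - α j) * ∏ i ∈ E j, (β k - α i) :=
      (Finset.mul_prod_erase _ _ (Finset.mem_univ j)).symm
    have hαβk : α j - β k ≠ 0 := fun h => hβkα j (by linarith [sub_eq_zero.mp h])
    have hne1 : ((-1 : ℝ) ^ n) ≠ 0 := by positivity
    have he' : e j = -(N j / Dp j) := by
      simp only [he]
      rw [h1, h2]
      rw [show ((-1 : ℝ) ^ (n + 1) * N j) = ((-1 : ℝ) ^ n) * (-(N j)) by rw [pow_succ]; ring]
      rw [mul_div_mul_left _ _ hne1, neg_div]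
    have hb : β k - α j ≠ 0 := hβkα j
    have hDpj : Dp j ≠ 0 := hDpne j
    rw [he', hd, h3]
    simp only []
    field_simp
    ring
  rw [Finset.sum_congr rfl fun j _ => hterm j] at hkey
  rw [← Finset.mul_sum] at hkey
  have : P * (1 + ∑ j, d j / (α j - β k)) = 0 := by rw [mul_add, mul_one]; exact hkey
  rcases mul_eq_zero.mp this with h | h
  · exact absurd h hPne
  · exact h
end

section
/- Suppose real numbers x_1, ..., x_m satisfy the linear system 1 + Σ_{j=1}^m α_j x_j / (l_0 (α_j − β_i)) = 0 for every i = 1, ..., m. Then necessarily x_j = l_0 · ((β_j − α_j)/α_j) · Π_{i ∈ {1,...,m}, i ≠ j} (β_i − α_j)/(α_i − α_j) for each j = 1, ..., m; i.e. the system has a unique solution, given by this formula. -/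
open Polynomial Finset

/-- If real numbers `x 1, ..., x m` satisfy the linear system
`1 + ∑ j, α j x j / (l0 (α j - β i)) = 0` for every `i`, then necessarily
`x j = l0 ((β j - α j)/α j) ∏_{i ≠ j} (β i - α j)/(α i - α j)`; i.e. the system has a
unique solution given by this formula. -/
theorem system_unique_solution
    (m : ℕ) (hm : 0 < m)
    (l0 : ℝ) (hl0 : 0 < l0)
    (α β : Fin m → ℝ)
    (hα1 : 0 < α ⟨0, hm⟩)
    (hαβ : ∀ j : Fin m, α j < β j)
    (hβα : ∀ j : Fin m, ∀ h : j.1 + 1 < m, β j < α ⟨j.1 + 1, h⟩)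
    (x : Fin m → ℝ)
    (hx : ∀ i : Fin m, 1 + ∑ j : Fin m, α j * x j / (l0 * (α j - β i)) = 0) :
    ∀ j : Fin m, x j = l0 * ((β j - α j) / α j) *
      ∏ i ∈ Finset.univ.erase j, (β i - α j) / (α i - α j) := by
  obtain ⟨n, rfl⟩ : ∃ n, m = n + 1 := ⟨m - 1, (Nat.succ_pred_eq_of_pos hm).symm⟩
  have hl0' : l0 ≠ 0 := ne_of_gt hl0
  -- α is strictly monotone
  have hαmono : StrictMono α := by
    rw [Fin.strictMono_iff_lt_succ]
    intro i
    have h2 := hβα i.castSucc (by simpa using i.isLt)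
    have : α ⟨i.1 + 1, by simpa using i.isLt⟩ = α i.succ := rfl
    exact lt_trans (hαβ i.castSucc) (this ▸ h2)
  -- α j ≠ β i for all i, j
  have hne : ∀ i j : Fin (n + 1), α j - β i ≠ 0 := by
    intro i j
    rcases le_or_gt j i with h | h
    · have : α j ≤ α i := hαmono.monotone h
      have := hαβ i
      intro hc; nlinarith
    · have hi1 : i.1 + 1 < n + 1 := lt_of_le_of_lt h j.isLt
      have h2 := hβα i hi1
      have : α ⟨i.1 + 1, hi1⟩ ≤ α j := hαmono.monotone (by exact h)
      intro hc; nlinarith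
  have hαpos : ∀ j : Fin (n + 1), 0 < α j := by
    intro j
    have : α ⟨0, hm⟩ ≤ α j := hαmono.monotone (Fin.zero_le j)
    linarith
  -- the key polynomials
  set P : ℝ[X] := C l0 * ∏ k, (C (α k) - X) +
      ∑ j, C (α j * x j) * ∏ k ∈ univ.erase j, (C (α k) - X) with hPdef
  set Q : ℝ[X] := C l0 * ∏ k, (C (β k) - X) with hQdef
  -- P vanishes at every β i
  have hPeval : ∀ i : Fin (n + 1), P.eval (β i) = 0 := by
    intro i
    have h1 := hx i
    have hsum : ∑ j, α j * x j / (l0 * (α j - β i)) = -1 := by linarith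
    have hterm : ∀ j : Fin (n + 1),
        α j * x j * ∏ k ∈ univ.erase j, (α k - β i) =
        (α j * x j / (l0 * (α j - β i))) * (l0 * ∏ k, (α k - β i)) := by
      intro j
      have hd : l0 * (α j - β i) ≠ 0 := mul_ne_zero hl0' (hne i j)
      rw [← Finset.mul_prod_erase univ (fun k => α k - β i) (mem_univ j),
        div_mul_eq_mul_div, eq_div_iff hd]
      ring
    have : P.eval (β i) = l0 * ∏ k, (α k - β i) +
        ∑ j, α j * x j * ∏ k ∈ univ.erase j, (α k - β i) := by
      simp [hPdef, eval_prod, eval_finset_sum]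
    rw [this, Finset.sum_congr rfl fun j _ => hterm j, ← Finset.sum_mul, hsum]
    ring
  -- degree considerations: P = Q
  have hdegprod : ∀ γ : Fin (n + 1) → ℝ,
      (∏ k, (C (γ k) - X) : ℝ[X]) = (-1) ^ (n + 1) * ∏ k, (X - C (γ k)) := by
    intro γ
    have : ∀ k : Fin (n + 1), (C (γ k) - X : ℝ[X]) = -1 * (X - C (γ k)) := by
      intro k; ring
    rw [Finset.prod_congr rfl fun k _ => this k, Finset.prod_mul_distrib]
    simp
  have hmonicα : (∏ k, (X - C (α k)) : ℝ[X]).Monic :=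
    monic_prod_of_monic _ _ fun k _ => monic_X_sub_C _
  have hmonicβ : (∏ k, (X - C (β k)) : ℝ[X]).Monic :=
    monic_prod_of_monic _ _ fun k _ => monic_X_sub_C _
  have hdegα : (∏ k, (X - C (α k)) : ℝ[X]).natDegree = n + 1 := by
    rw [natDegree_prod _ _ fun k _ => X_sub_C_ne_zero _]
    simp
  have hdegβ : (∏ k, (X - C (β k)) : ℝ[X]).natDegree = n + 1 := by
    rw [natDegree_prod _ _ fun k _ => X_sub_C_ne_zero _]
    simp
  have hdiff : ((∏ k, (X - C (α k)) : ℝ[X]) - ∏ k, (X - C (β k))).natDegree < n + 1 := by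
    rcases eq_or_ne ((∏ k, (X - C (α k)) : ℝ[X]) - ∏ k, (X - C (β k))) 0 with h | h
    · rw [h]; simp
    · have hd : ((∏ k, (X - C (α k)) : ℝ[X]) - ∏ k, (X - C (β k))).degree <
          (∏ k, (X - C (α k)) : ℝ[X]).degree := by
        apply degree_sub_lt
        · rw [degree_eq_natDegree hmonicα.ne_zero, degree_eq_natDegree hmonicβ.ne_zero,
            hdegα, hdegβ]
        · exact hmonicα.ne_zero
        · rw [hmonicα.leadingCoeff, hmonicβ.leadingCoeff]
      rw [degree_eq_natDegree hmonicα.ne_zero, hdegα] at hd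
      exact natDegree_lt_iff_degree_lt h |>.mpr hd
  have hPQdeg : (P - Q).natDegree < n + 1 := by
    have hrw : P - Q = (C l0 * (-1) ^ (n + 1)) *
        ((∏ k, (X - C (α k))) - ∏ k, (X - C (β k))) +
        ∑ j, C (α j * x j) * ∏ k ∈ univ.erase j, (C (α k) - X) := by
      rw [hPdef, hQdef, hdegprod α, hdegprod β]; ring
    rw [hrw]
    apply lt_of_le_of_lt (natDegree_add_le _ _)
    apply max_lt
    · apply lt_of_le_of_lt (natDegree_mul_le)
      have h1 : (C l0 * (-1) ^ (n + 1) : ℝ[X]).natDegree = 0 := by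
        have h2 : ((-1 : ℝ[X])) ^ (n + 1) = C ((-1 : ℝ) ^ (n + 1)) := by
          rw [← C_1, ← C_neg, ← C_pow]
        rw [h2, ← C_mul, natDegree_C]
      rw [h1, zero_add]
      exact hdiff
    · have : ∀ j : Fin (n + 1),
          (C (α j * x j) * ∏ k ∈ univ.erase j, (C (α k) - X) : ℝ[X]).natDegree ≤ n := by
        intro j
        apply le_trans natDegree_mul_le
        rw [natDegree_C, zero_add]
        apply le_trans (natDegree_prod_le _ _)
        calc ∑ k ∈ univ.erase j, (C (α k) - X : ℝ[X]).natDegree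
            ≤ ∑ k ∈ univ.erase j, 1 := Finset.sum_le_sum fun k _ => by
              apply le_trans (natDegree_sub_le _ _); simp
          _ = n := by simp [Finset.card_erase_of_mem]
      exact lt_of_le_of_lt (natDegree_sum_le_of_forall_le _ _ (fun j _ => this j)) (by omega)
  have hPQ : P = Q := by
    have := Polynomial.eq_zero_of_natDegree_lt_card_of_eval_eq_zero (P - Q)
      (f := β) (fun i j hij => by
        by_contra hne'
        rcases lt_or_gt_of_ne hne' with h | h
        · have h1 : i.1 + 1 < n + 1 := lt_of_le_of_lt h j.isLt
          have := hβα i h1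
          have h3 : α ⟨i.1 + 1, h1⟩ ≤ α j := hαmono.monotone (by exact h)
          have := hαβ j
          linarith
        · have h1 : j.1 + 1 < n + 1 := lt_of_le_of_lt h i.isLt
          have := hβα j h1
          have h3 : α ⟨j.1 + 1, h1⟩ ≤ α i := hαmono.monotone (by exact h)
          have := hαβ i
          linarith)
      (fun i => by
        rw [eval_sub, hPeval i, hQdef]
        simp [eval_prod]
        right
        exact Finset.prod_eq_zero (mem_univ i) (by ring))
      (by simpa using hPQdeg)
    exact sub_eq_zero.mp this
  -- evaluate at α j
  intro j
  have hEval : P.eval (α j) = Q.eval (α j) := by rw [hPQ]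
  have hP : P.eval (α j) = α j * x j * ∏ i ∈ univ.erase j, (α i - α j) := by
    have h0 : (∏ k, (α k - α j)) = 0 :=
      Finset.prod_eq_zero (mem_univ j) (by ring)
    have hsum : ∑ k, (α k * x k) * ∏ i ∈ univ.erase k, (α i - α j) =
        α j * x j * ∏ i ∈ univ.erase j, (α i - α j) := by
      apply Finset.sum_eq_single j
      · intro k _ hk
        have : (∏ i ∈ univ.erase k, (α i - α j)) = 0 :=
          Finset.prod_eq_zero (Finset.mem_erase.mpr ⟨Ne.symm hk, mem_univ j⟩)
            (by ring)
        rw [this]; ring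
      · intro h; exact absurd (mem_univ j) h
    simp only [hPdef, eval_add, eval_mul, eval_C, eval_prod, eval_finset_sum, eval_sub, eval_X]
    rw [h0, hsum]; ring
  have hQe : Q.eval (α j) = l0 * ((β j - α j) * ∏ i ∈ univ.erase j, (β i - α j)) := by
    simp only [hQdef, eval_mul, eval_C, eval_prod, eval_sub, eval_X]
    rw [← Finset.mul_prod_erase univ (fun k => β k - α j) (mem_univ j)]
  rw [hP, hQe] at hEval
  have hαj : α j ≠ 0 := ne_of_gt (hαpos j)
  have hprodne : (∏ i ∈ univ.erase j, (α i - α j)) ≠ 0 := by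
    apply Finset.prod_ne_zero_iff.mpr
    intro i hi
    have hij : i ≠ j := (Finset.mem_erase.mp hi).1
    exact sub_ne_zero.mpr fun h => hij (hαmono.injective h)
  rw [Finset.prod_div_distrib]
  field_simp
  linarith [hEval]
end

section
/- Define l_j := l_0 · ((β_j − α_j)/α_j) · Π_{i ∈ {1,...,m}, i ≠ j} (β_i − α_j)/(α_i − α_j) for j = 1, ..., m, and define F(λ) := 1 + Σ_{j=1}^m α_j l_j / (l_0 (α_j − λ)) for λ ∈ ℂ \ {α_1, ..., α_m}. Then for λ ∈ ℂ \ {α_1, ..., α_m} one has F(λ) = 0 if and only if λ ∈ {β_1, ..., β_m}; i.e. the roots of F are exactly the prescribed numbers β_1, ..., β_m. -/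
lemma frac_aux (A B L Pb Pa lamv : ℂ) (hA : A ≠ 0) (hL : L ≠ 0) (hPa : Pa ≠ 0)
    (h1 : A - lamv ≠ 0) (h2 : lamv - A ≠ 0) :
    (A * (L * ((B - A) / A) * (Pb / Pa))) / (L * (A - lamv))
      = (((A - B) * Pb) / Pa) / (lamv - A) := by
  field_simp
  ring

open Polynomial Finset in
lemma key_identity_aux {m : ℕ} (hm : 0 < m) (a b : Fin m → ℂ)
    (ha : Function.Injective a) (lam : ℂ) (hlam : ∀ i, lam ≠ a i) :
    1 + ∑ j, ((∏ i, (a j - b i)) / (∏ i ∈ Finset.univ.erase j, (a j - a i))) / (lam - a j)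
      = ∏ i, (lam - b i) / (lam - a i) := by
  classical
  have ha' : ∀ j : Fin m, ∀ i ∈ Finset.univ.erase j, a j - a i ≠ 0 := by
    intro j i hi
    have hij : i ≠ j := (Finset.mem_erase.mp hi).1
    exact sub_ne_zero.mpr fun h => hij (ha h.symm)
  set e : Fin m → ℂ := fun j => ∏ i ∈ Finset.univ.erase j, (a j - a i) with he
  have he0 : ∀ j, e j ≠ 0 := fun j => Finset.prod_ne_zero_iff.mpr (ha' j)
  set d : Fin m → ℂ := fun j => (∏ i, (a j - b i)) / e j with hd
  set P : ℂ[X] := ∏ i, (X - C (b i)) with hP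
  set A : ℂ[X] := ∏ i, (X - C (a i)) with hA
  set Aj : Fin m → ℂ[X] := fun j => ∏ i ∈ Finset.univ.erase j, (X - C (a i)) with hAj
  have hPm : P.Monic := monic_prod_of_monic _ _ fun i _ => monic_X_sub_C _
  have hAm : A.Monic := monic_prod_of_monic _ _ fun i _ => monic_X_sub_C _
  have hPdeg : P.degree = (m : WithBot ℕ) := by
    rw [hP, degree_prod]
    simp [degree_X_sub_C]
  have hAdeg : A.degree = (m : WithBot ℕ) := by
    rw [hA, degree_prod]
    simp [degree_X_sub_C]
  have heval : ∀ k, Polynomial.eval (a k) (P - (A + ∑ j, C (d j) * Aj j)) = 0 := by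
    intro k
    have hA0 : A.eval (a k) = 0 := by
      rw [hA, eval_prod]
      exact Finset.prod_eq_zero (Finset.mem_univ k) (by simp)
    have hAj0 : ∀ j, j ≠ k → (Aj j).eval (a k) = 0 := by
      intro j hjk
      rw [hAj, eval_prod]
      exact Finset.prod_eq_zero
        (Finset.mem_erase.mpr ⟨fun h => hjk h.symm, Finset.mem_univ k⟩) (by simp)
    have hAk : (Aj k).eval (a k) = e k := by
      simp [hAj, eval_prod, he]
    rw [eval_sub, eval_add, eval_finset_sum]
    simp only [eval_mul, eval_C]
    rw [Finset.sum_eq_single k (fun j _ hjk => by rw [hAj0 j hjk, mul_zero]) (by simp)]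
    rw [hA0, hAk, hd]
    simp only [hP, eval_prod, eval_sub, eval_X, eval_C]
    rw [div_mul_cancel₀ _ (he0 k)]
    ring
  have hD : P - (A + ∑ j, C (d j) * Aj j) = 0 := by
    by_contra hne
    apply hne
    apply Polynomial.eq_zero_of_natDegree_lt_card_of_eval_eq_zero _ ha heval
    rw [Fintype.card_fin]
    rw [Polynomial.natDegree_lt_iff_degree_lt hne]
    have h1 : (P - A).degree < (m : WithBot ℕ) := by
      rw [← hPdeg]
      exact degree_sub_lt (hPdeg.trans hAdeg.symm) hPm.ne_zero
        (by rw [hPm.leadingCoeff, hAm.leadingCoeff])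
    have h2 : (∑ j, C (d j) * Aj j).degree < (m : WithBot ℕ) := by
      refine lt_of_le_of_lt (degree_sum_le _ _) ?_
      rw [Finset.sup_lt_iff (by exact_mod_cast WithBot.bot_lt_coe m)]
      intro j _
      refine lt_of_le_of_lt (degree_mul_le _ _) ?_
      have hd1 : (C (d j)).degree ≤ 0 := degree_C_le
      have hd2 : (Aj j).degree = ((m - 1 : ℕ) : WithBot ℕ) := by
        rw [hAj, degree_prod]
        simp [degree_X_sub_C, Finset.card_erase_of_mem]
      calc (C (d j)).degree + (Aj j).degree ≤ 0 + ((m-1 : ℕ) : WithBot ℕ) := by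
            rw [hd2]; exact add_le_add_left hd1 _
        _ = ((m - 1 : ℕ) : WithBot ℕ) := by rw [zero_add]
        _ < (m : WithBot ℕ) := by exact_mod_cast Nat.sub_lt hm one_pos
    calc (P - (A + ∑ j, C (d j) * Aj j)).degree
        = ((P - A) - ∑ j, C (d j) * Aj j).degree := by rw [sub_add_eq_sub_sub]
      _ ≤ max (P - A).degree (∑ j, C (d j) * Aj j).degree := degree_sub_le _ _
      _ < (m : WithBot ℕ) := max_lt h1 h2
  have hPQ : P = A + ∑ j, C (d j) * Aj j := by
    have := sub_eq_zero.mp hD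
    exact this
  have hid : (∏ i, (lam - b i))
      = (∏ i, (lam - a i)) + ∑ j, d j * ∏ i ∈ Finset.univ.erase j, (lam - a i) := by
    have := congrArg (Polynomial.eval lam) hPQ
    simpa [hP, hA, hAj, eval_prod, eval_finset_sum] using this
  have hne : ∀ i : Fin m, lam - a i ≠ 0 := fun i => sub_ne_zero.mpr (hlam i)
  have hprodne : (∏ i, (lam - a i)) ≠ 0 := Finset.prod_ne_zero_iff.mpr fun i _ => hne i
  rw [Finset.prod_div_distrib, hid, add_div, div_self hprodne]
  congr 1
  rw [Finset.sum_div]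
  refine Finset.sum_congr rfl fun j _ => ?_
  have herase : ∀ j : Fin m, (∏ i ∈ Finset.univ.erase j, (lam - a i)) ≠ 0 :=
    fun j => Finset.prod_ne_zero_iff.mpr fun i _ => hne i
  rw [← Finset.mul_prod_erase Finset.univ (fun i => lam - a i) (Finset.mem_univ j)]
  rw [mul_comm (lam - a j), ← div_div, mul_div_assoc, div_self (herase j), mul_one]

/-- With `l j = l0 ((β j - α j)/α j) ∏_{i ≠ j} (β i - α j)/(α i - α j)` and
`F(λ) = 1 + ∑ j, α j l j / (l0 (α j - λ))`, for `λ ∈ ℂ \ {α 1, ..., α m}` one has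
`F(λ) = 0` iff `λ ∈ {β 1, ..., β m}`. -/
theorem roots_are_prescribed
    (m : ℕ) (hm : 0 < m)
    (l0 : ℝ) (hl0 : 0 < l0)
    (α β : Fin m → ℝ)
    (hα1 : 0 < α ⟨0, hm⟩)
    (hαβ : ∀ j : Fin m, α j < β j)
    (hβα : ∀ j : Fin m, ∀ h : j.1 + 1 < m, β j < α ⟨j.1 + 1, h⟩)
    (l : Fin m → ℝ)
    (hldef : ∀ j : Fin m, l j = l0 * ((β j - α j) / α j) *
      ∏ i ∈ Finset.univ.erase j, (β i - α j) / (α i - α j))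
    (F : ℂ → ℂ)
    (hF : ∀ lam : ℂ, F lam = 1 + ∑ j : Fin m,
      ((α j : ℂ) * (l j : ℂ)) / ((l0 : ℂ) * ((α j : ℂ) - lam))) :
    ∀ lam : ℂ, (∀ i : Fin m, lam ≠ (α i : ℂ)) →
      (F lam = 0 ↔ ∃ j : Fin m, lam = (β j : ℂ)) := by
  classical
  intro lam hlam
  -- monotonicity of α
  have hstep : ∀ j : Fin m, ∀ h : j.1 + 1 < m, α j < α ⟨j.1 + 1, h⟩ :=
    fun j h => (hαβ j).trans (hβα j h)
  have hchain : ∀ n : ℕ, ∀ hn : n < m, ∀ i : Fin m, (i : ℕ) < n → α i < α ⟨n, hn⟩ := by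
    intro n
    induction n with
    | zero => intro hn i hi; omega
    | succ k ih =>
      intro hn i hi
      have hk : k < m := by omega
      have hs : α ⟨k, hk⟩ < α ⟨k + 1, hn⟩ := hstep ⟨k, hk⟩ hn
      rcases Nat.lt_or_ge (i : ℕ) k with h | h
      · exact (ih hk i h).trans hs
      · have hik : (i : ℕ) = k := by omega
        have : i = ⟨k, hk⟩ := Fin.ext hik
        rw [this]; exact hs
  have hmono : ∀ i j : Fin m, (i : ℕ) < (j : ℕ) → α i < α j := by
    intro i j hij
    have := hchain j.1 j.2 i hij
    simpa using this
  have hainj : Function.Injective α := by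
    intro i j hij
    by_contra hne
    rcases Ne.lt_or_gt (fun h : (i : ℕ) = (j : ℕ) => hne (Fin.ext h)) with h | h
    · exact absurd hij (ne_of_lt (hmono i j h))
    · exact absurd hij.symm (ne_of_lt (hmono j i h))
  have hαpos : ∀ j : Fin m, 0 < α j := by
    intro j
    rcases Nat.eq_zero_or_pos (j : ℕ) with h | h
    · have : j = ⟨0, hm⟩ := Fin.ext h
      rw [this]; exact hα1
    · exact hα1.trans (hmono ⟨0, hm⟩ j h)
  -- complex versions
  set a : Fin m → ℂ := fun j => (α j : ℂ) with hadef
  set b : Fin m → ℂ := fun j => (β j : ℂ) with hbdef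
  have hainjC : Function.Injective a := fun i j h =>
    hainj (Complex.ofReal_injective h)
  have hlamC : ∀ i, lam ≠ a i := hlam
  have hneC : ∀ i : Fin m, lam - a i ≠ 0 := fun i => sub_ne_zero.mpr (hlamC i)
  have hl0C : (l0 : ℂ) ≠ 0 := by exact_mod_cast hl0.ne'
  have haC : ∀ j, a j ≠ 0 := fun j => Complex.ofReal_ne_zero.mpr (hαpos j).ne'
  have herasene : ∀ j : Fin m, (∏ i ∈ Finset.univ.erase j, (a j - a i)) ≠ 0 := by
    intro j
    refine Finset.prod_ne_zero_iff.mpr fun i hi => ?_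
    have hij : i ≠ j := (Finset.mem_erase.mp hi).1
    exact sub_ne_zero.mpr fun h => hij (hainjC h.symm)
  -- rewrite each term of F
  have hterm : ∀ j : Fin m,
      ((α j : ℂ) * (l j : ℂ)) / ((l0 : ℂ) * ((α j : ℂ) - lam))
        = ((∏ i, (a j - b i)) / (∏ i ∈ Finset.univ.erase j, (a j - a i))) / (lam - a j) := by
    intro j
    rw [hldef j]
    push_cast
    have hq : ∏ i ∈ Finset.univ.erase j, ((b i - a j) / (a i - a j))
        = (∏ i ∈ Finset.univ.erase j, (a j - b i)) / (∏ i ∈ Finset.univ.erase j, (a j - a i)) := by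
      rw [← Finset.prod_div_distrib]
      refine Finset.prod_congr rfl fun i _ => ?_
      rw [← neg_sub (a j) (b i), ← neg_sub (a j) (a i), neg_div_neg_eq]
    rw [hq]
    rw [← Finset.mul_prod_erase Finset.univ (fun i => a j - b i) (Finset.mem_univ j)]
    have h1 := herasene j
    have h2 := hneC j
    have h3 : a j - lam ≠ 0 := fun h => h2 (by rw [← neg_sub] at h; simpa using neg_eq_zero.mp h)
    exact frac_aux (a j) (b j) (l0 : ℂ) _ _ lam (haC j) hl0C h1 h3 h2
  have hFval : F lam = ∏ i, (lam - b i) / (lam - a i) := by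
    rw [hF lam]
    rw [Finset.sum_congr rfl fun j _ => hterm j]
    exact key_identity_aux hm a b hainjC lam hlamC
  rw [hFval]
  constructor
  · intro h
    rcases Finset.prod_eq_zero_iff.mp h with ⟨i, _, hi⟩
    rcases div_eq_zero_iff.mp hi with h' | h'
    · exact ⟨i, by linear_combination h'⟩
    · exact absurd h' (hneC i)
  · rintro ⟨j, rfl⟩
    refine Finset.prod_eq_zero (Finset.mem_univ j) ?_
    rw [sub_self, zero_div]
end
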